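/- arXiv:1905.09303 — 2 statements merged into one kernel-verified Lean document; each statement's English description precedes it below -/
import Mathlib

section
/- (Shifted Turán–Kubilius inequality, L² form.) Let h ∈ F_q[x] be a fixed polynomial with deg h < n, and let ψ(P^m) be arbitrary complex numbers indexed by monic irreducible polynomials P and integers m ≥ 1. Then ∑_{f ∈ M_{n,q}} | ∑_{P^m ∥ f+h} ψ(P^m) − ∑_{(P,m): m·deg P ≤ n} ψ(P^m)·q^{−m·deg P}·(1 − q^{−deg P}) |² ≪ q^n · ∑_{(P,m): m·deg P ≤ n} |ψ(P^m)|²/q^{m·deg P}, with an absolute implied constant; here the inner sum on the left runs over exact prime powers P^m ∥ f+h (meaning P^m | f+h and P^{m+1} ∤ f+h). -/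
open scoped Classical
open Polynomial

/-- The exact exponent of the monic irreducible `P` in `f`, i.e. the `m` with `P^m ∥ f`. -/
noncomputable def exactExp {Fq : Type*} [Field Fq] (f P : Polynomial Fq) : ℕ :=
  (UniqueFactorizationMonoid.normalizedFactors f).count P

set_option linter.unusedSectionVars false
set_option maxHeartbeats 1000000

namespace TK

open Finset


variable {Fq : Type*} [Field Fq] [Fintype Fq]

noncomputable instance (n : ℕ) : Fintype {p : Polynomial Fq // p.Monic ∧ p.natDegree = n} :=
  Fintype.ofEquiv (Fin n → Fq)
    ((Polynomial.monicEquivDegreeLT n).trans (Polynomial.degreeLTEquiv Fq n).toEquiv).symm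

noncomputable def Mfin (Fq : Type*) [Field Fq] [Fintype Fq] (n : ℕ) : Finset (Polynomial Fq) :=
  Finset.univ.image (fun p : {p : Polynomial Fq // p.Monic ∧ p.natDegree = n} => (p : Polynomial Fq))

lemma mem_Mfin {n : ℕ} {g : Polynomial Fq} :
    g ∈ Mfin Fq n ↔ g.Monic ∧ g.natDegree = n := by
  simp only [Mfin, Finset.mem_image, Finset.mem_univ, true_and]
  constructor
  · rintro ⟨⟨p, hp⟩, rfl⟩; exact hp
  · intro hg; exact ⟨⟨g, hg⟩, rfl⟩

lemma card_Mfin (n : ℕ) : (Mfin Fq n).card = Fintype.card Fq ^ n := by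
  rw [Mfin, Finset.card_image_of_injective _ Subtype.val_injective, Finset.card_univ,
    Fintype.card_congr ((Polynomial.monicEquivDegreeLT n).trans
      (Polynomial.degreeLTEquiv Fq n).toEquiv)]
  simp

lemma card_dvd_filter {n : ℕ} {a : Polynomial Fq} (ha : a.Monic) (hd : a.natDegree ≤ n) :
    (((Mfin Fq n)).filter (fun g => a ∣ g)).card = Fintype.card Fq ^ (n - a.natDegree) := by
  rw [← card_Mfin (Fq := Fq) (n - a.natDegree)]
  symm
  apply Finset.card_bij (fun b _ => a * b)
  · intro b hb
    rw [mem_Mfin] at hb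
    rw [Finset.mem_filter, mem_Mfin]
    refine ⟨⟨ha.mul hb.1, ?_⟩, Dvd.intro _ rfl⟩
    rw [natDegree_mul ha.ne_zero hb.1.ne_zero, hb.2]
    omega
  · intro b hb c hc hbc
    exact mul_left_cancel₀ ha.ne_zero hbc
  · intro g hg
    rw [Finset.mem_filter, mem_Mfin] at hg
    obtain ⟨⟨hgm, hgd⟩, c, rfl⟩ := hg
    have hc : c ≠ 0 := by
      rintro rfl; rw [mul_zero] at hgm; exact (not_monic_zero) hgm
    have hcm : c.Monic := by
      have h2 := hgm.leadingCoeff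
      rw [leadingCoeff_mul, ha.leadingCoeff, one_mul] at h2
      exact h2
    refine ⟨c, ?_, rfl⟩
    rw [mem_Mfin]
    refine ⟨hcm, ?_⟩
    rw [natDegree_mul ha.ne_zero hc] at hgd
    omega

lemma filter_dvd_empty {n : ℕ} {a : Polynomial Fq} (hd : n < a.natDegree) :
    (((Mfin Fq n)).filter (fun g => a ∣ g)) = ∅ := by
  rw [Finset.filter_eq_empty_iff]
  intro g hg
  rw [mem_Mfin] at hg
  intro hdvd
  have := Polynomial.natDegree_le_of_dvd hdvd hg.1.ne_zero
  omega



variable {Fq : Type*} [Field Fq] [Fintype Fq]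

lemma monic_irred_ne_coprime {P Q : Polynomial Fq} (hPm : P.Monic) (hQm : Q.Monic)
    (hP : Irreducible P) (hQ : Irreducible Q) (hne : P ≠ Q) {a b : ℕ} :
    IsCoprime (P ^ a) (Q ^ b) := by
  apply IsCoprime.pow
  rw [hP.coprime_iff_not_dvd]
  intro hdvd
  exact hne (eq_of_monic_of_associated hPm hQm (hP.associated_of_dvd hQ hdvd))

lemma exactExp_spec {g P : Polynomial Fq} (hg : g ≠ 0) (hPm : P.Monic) (hP : Irreducible P)
    (hd : P ∣ g) :
    1 ≤ exactExp g P ∧ P ^ exactExp g P ∣ g ∧ ¬ P ^ (exactExp g P + 1) ∣ g := by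
  have hem : emultiplicity P g = (exactExp g P : ℕ∞) := by
    rw [UniqueFactorizationMonoid.emultiplicity_eq_count_normalizedFactors hP hg,
      hPm.normalize_eq_self]
    rfl
  obtain ⟨h1, h2⟩ := emultiplicity_eq_coe.mp hem
  refine ⟨?_, h1, h2⟩
  by_contra hc
  push_neg at hc
  rw [Nat.lt_one_iff] at hc
  rw [hc, zero_add, pow_one] at h2
  exact h2 hd

lemma exactExp_eq {g P : Polynomial Fq} (hPm : P.Monic) (hP : Irreducible P)
    {m : ℕ} (h1 : P ^ m ∣ g) (h2 : ¬ P ^ (m + 1) ∣ g) : exactExp g P = m :=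
  UniqueFactorizationMonoid.count_normalizedFactors_eq hP hPm.normalize_eq_self h1 h2



variable {Fq : Type*} [Field Fq] [Fintype Fq]

/-- indicator of divisibility -/
noncomputable def ind (a g : Polynomial Fq) : ℝ := if a ∣ g then 1 else 0

lemma ind_nonneg {a g : Polynomial Fq} : 0 ≤ ind a g := by
  unfold ind; split <;> norm_num

lemma ind_le_one {a g : Polynomial Fq} : ind a g ≤ 1 := by
  unfold ind; split <;> norm_num

lemma qr_pos : (0:ℝ) < (Fintype.card Fq : ℝ) := by
  have := Fintype.card_pos (α := Fq); positivity

lemma qr_two : (2:ℝ) ≤ (Fintype.card Fq : ℝ) := by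
  have := Fintype.one_lt_card (α := Fq)
  exact_mod_cast this

lemma sum_ind_eq {n : ℕ} {a : Polynomial Fq} (ha : a.Monic) (hd : a.natDegree ≤ n) :
    ∑ g ∈ Mfin Fq n, ind a g
      = (Fintype.card Fq : ℝ) ^ n * ((Fintype.card Fq : ℝ) ^ a.natDegree)⁻¹ := by
  have h0 : ((Fintype.card Fq : ℝ)) ≠ 0 := ne_of_gt qr_pos
  have : ∑ g ∈ Mfin Fq n, ind a g
      = ((((Mfin Fq n)).filter (fun g => a ∣ g)).card : ℝ) := by
    simp only [ind, Finset.sum_boole]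
  rw [this, card_dvd_filter ha hd]
  push_cast
  rw [pow_sub₀ _ h0 hd]


lemma sum_ind_le {n : ℕ} {a : Polynomial Fq} (ha : a.Monic) :
    ∑ g ∈ Mfin Fq n, ind a g
      ≤ (Fintype.card Fq : ℝ) ^ n * ((Fintype.card Fq : ℝ) ^ a.natDegree)⁻¹ := by
  by_cases hd : a.natDegree ≤ n
  · exact le_of_eq (sum_ind_eq ha hd)
  · have : ∑ g ∈ Mfin Fq n, ind a g
        = ((((Mfin Fq n)).filter (fun g => a ∣ g)).card : ℝ) := by
      simp only [ind, Finset.sum_boole]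
    rw [this, filter_dvd_empty (by omega)]
    simp only [Finset.card_empty, Nat.cast_zero]
    positivity


/-- exact-divisibility indicator -/
noncomputable def Ee (s : Polynomial Fq × ℕ) (g : Polynomial Fq) : ℝ :=
  ind (s.1 ^ s.2) g - ind (s.1 ^ (s.2+1)) g

/-- the expected density -/
noncomputable def lam (s : Polynomial Fq × ℕ) : ℝ :=
  ((Fintype.card Fq : ℝ) ^ (s.2 * s.1.natDegree))⁻¹ *
    (1 - ((Fintype.card Fq : ℝ) ^ s.1.natDegree)⁻¹)

lemma lam_eq (s : Polynomial Fq × ℕ) :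
    lam s = ((Fintype.card Fq : ℝ) ^ (s.2 * s.1.natDegree))⁻¹
      - ((Fintype.card Fq : ℝ) ^ (s.2 * s.1.natDegree + s.1.natDegree))⁻¹ := by
  rw [lam, pow_add, mul_inv]
  ring

lemma lam_nonneg (s : Polynomial Fq × ℕ) : 0 ≤ lam s := by
  rw [lam]
  have h1 : (0:ℝ) < (Fintype.card Fq : ℝ) := qr_pos
  have h2 : ((Fintype.card Fq : ℝ) ^ s.1.natDegree)⁻¹ ≤ 1 := by
    rw [inv_le_one_iff₀]; right; exact one_le_pow₀ (by linarith [qr_two (Fq := Fq)])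
  have h3 : (0:ℝ) ≤ ((Fintype.card Fq : ℝ) ^ (s.2 * s.1.natDegree))⁻¹ := by positivity
  nlinarith

lemma lam_le (s : Polynomial Fq × ℕ) :
    lam s ≤ ((Fintype.card Fq : ℝ) ^ (s.2 * s.1.natDegree))⁻¹ := by
  rw [lam]
  have h1 : (0:ℝ) < (Fintype.card Fq : ℝ) := qr_pos
  have h2 : (0:ℝ) ≤ ((Fintype.card Fq : ℝ) ^ (s.2 * s.1.natDegree))⁻¹ := by positivity
  have h3 : (0:ℝ) ≤ ((Fintype.card Fq : ℝ) ^ s.1.natDegree)⁻¹ := by positivity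
  nlinarith

lemma Ee_eq_ite (s : Polynomial Fq × ℕ) (g : Polynomial Fq) :
    Ee s g = if s.1 ^ s.2 ∣ g ∧ ¬ s.1 ^ (s.2+1) ∣ g then 1 else 0 := by
  have hmono : s.1 ^ (s.2+1) ∣ g → s.1 ^ s.2 ∣ g :=
    fun hd => dvd_trans (pow_dvd_pow _ (Nat.le_succ _)) hd
  rw [Ee, ind, ind]
  by_cases h1 : s.1 ^ s.2 ∣ g <;> by_cases h2 : s.1 ^ (s.2+1) ∣ g <;>
    simp [h1, h2, hmono] <;> tauto

lemma Ee_nonneg (s : Polynomial Fq × ℕ) (g : Polynomial Fq) : 0 ≤ Ee s g := by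
  rw [Ee_eq_ite]; split <;> norm_num

lemma Ee_le_one (s : Polynomial Fq × ℕ) (g : Polynomial Fq) : Ee s g ≤ 1 := by
  rw [Ee_eq_ite]; split <;> norm_num

/-- the finite index set of prime powers -/
noncomputable def Sfin (Fq : Type*) [Field Fq] [Fintype Fq] (n : ℕ) :
    Finset (Polynomial Fq × ℕ) :=
  (((Finset.range (n+1)).biUnion (fun d => Mfin Fq d)) ×ˢ Finset.range (n+1)).filter
    (fun s => Irreducible s.1 ∧ 1 ≤ s.2 ∧ s.2 * s.1.natDegree ≤ n)

lemma mem_Sfin {n : ℕ} {s : Polynomial Fq × ℕ} :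
    s ∈ Sfin Fq n ↔ s.1.Monic ∧ Irreducible s.1 ∧ 1 ≤ s.2 ∧ s.2 * s.1.natDegree ≤ n := by
  rw [Sfin, Finset.mem_filter, Finset.mem_product, Finset.mem_biUnion]
  constructor
  · rintro ⟨⟨⟨d, hd, hP⟩, hm⟩, h⟩
    exact ⟨(mem_Mfin.mp hP).1, h⟩
  · rintro ⟨hM, hI, hm, hr⟩
    have hdpos : 1 ≤ s.1.natDegree := hI.natDegree_pos
    refine ⟨⟨⟨s.1.natDegree, ?_, mem_Mfin.mpr ⟨hM, rfl⟩⟩, ?_⟩, hI, hm, hr⟩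
    · rw [Finset.mem_range]; nlinarith
    · rw [Finset.mem_range]; nlinarith


lemma ind_mul_coprime {a b g : Polynomial Fq} (h : IsCoprime a b) :
    ind a g * ind b g = ind (a*b) g := by
  unfold ind
  by_cases h1 : a ∣ g <;> by_cases h2 : b ∣ g
  · simp [h1, h2, h.mul_dvd h1 h2]
  · have hn : ¬ a * b ∣ g := fun hd => h2 (dvd_trans (dvd_mul_left b a) hd)
    simp [h1, h2, hn]
  · have hn : ¬ a * b ∣ g := fun hd => h1 (dvd_trans (dvd_mul_right a b) hd)
    simp [h1, h2, hn]
  · have hn : ¬ a * b ∣ g := fun hd => h1 (dvd_trans (dvd_mul_right a b) hd)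
    simp [h1, h2, hn]

lemma Ee_mul_same {s t : Polynomial Fq × ℕ} (h1 : s.1 = t.1) (h2 : s.2 ≠ t.2)
    (g : Polynomial Fq) : Ee s g * Ee t g = 0 := by
  rw [Ee_eq_ite, Ee_eq_ite]
  by_cases hs : s.1 ^ s.2 ∣ g ∧ ¬ s.1 ^ (s.2+1) ∣ g
  · by_cases ht : t.1 ^ t.2 ∣ g ∧ ¬ t.1 ^ (t.2+1) ∣ g
    · exfalso
      rcases Nat.lt_or_ge s.2 t.2 with hlt | hge
      · exact hs.2 (dvd_trans (pow_dvd_pow s.1 (by omega)) (h1 ▸ ht.1))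
      · have : t.2 < s.2 := by omega
        exact ht.2 (dvd_trans (pow_dvd_pow t.1 (by omega)) (h1 ▸ hs.1))
    · simp [ht]
  · simp [hs]

section NN

variable {n : ℕ}

local notation "qn" => ((Fintype.card Fq : ℝ) ^ n)
local notation "qr" => (Fintype.card Fq : ℝ)

lemma natDegree_pow_pair (s : Polynomial Fq × ℕ) :
    (s.1 ^ s.2).natDegree = s.2 * s.1.natDegree := natDegree_pow _ _

lemma sumEe_nonneg (s : Polynomial Fq × ℕ) : 0 ≤ ∑ g ∈ Mfin Fq n, Ee s g :=
  Finset.sum_nonneg fun g _ => Ee_nonneg s g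

lemma sumEe_le {s : Polynomial Fq × ℕ} (hM : s.1.Monic) :
    ∑ g ∈ Mfin Fq n, Ee s g ≤ qn * (qr ^ (s.2 * s.1.natDegree))⁻¹ := by
  have h1 : ∑ g ∈ Mfin Fq n, Ee s g ≤ ∑ g ∈ Mfin Fq n, ind (s.1 ^ s.2) g := by
    apply Finset.sum_le_sum
    intro g _
    rw [Ee]
    have := ind_nonneg (a := s.1 ^ (s.2+1)) (g := g)
    linarith
  calc ∑ g ∈ Mfin Fq n, Ee s g ≤ ∑ g ∈ Mfin Fq n, ind (s.1 ^ s.2) g := h1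
    _ ≤ qn * (qr ^ ((s.1 ^ s.2).natDegree))⁻¹ := sum_ind_le (hM.pow _)
    _ = qn * (qr ^ (s.2 * s.1.natDegree))⁻¹ := by rw [natDegree_pow_pair]

lemma sumEe_eq {s : Polynomial Fq × ℕ} (hM : s.1.Monic)
    (hrd : s.2 * s.1.natDegree + s.1.natDegree ≤ n) :
    ∑ g ∈ Mfin Fq n, Ee s g = qn * lam s := by
  have hr : s.2 * s.1.natDegree ≤ n := by omega
  have d1 : (s.1 ^ s.2).natDegree = s.2 * s.1.natDegree := natDegree_pow_pair s
  have d2 : (s.1 ^ (s.2+1)).natDegree = s.2 * s.1.natDegree + s.1.natDegree := by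
    rw [natDegree_pow]; ring
  rw [show (∑ g ∈ Mfin Fq n, Ee s g)
      = ∑ g ∈ Mfin Fq n, ind (s.1 ^ s.2) g - ∑ g ∈ Mfin Fq n, ind (s.1 ^ (s.2+1)) g by
    rw [← Finset.sum_sub_distrib]; rfl]
  rw [sum_ind_eq (hM.pow _) (by omega), sum_ind_eq (hM.pow _) (by omega), d1, d2, lam_eq]
  ring

lemma sumEe_err {s : Polynomial Fq × ℕ} (hM : s.1.Monic)
    (hr : s.2 * s.1.natDegree ≤ n) :
    |∑ g ∈ Mfin Fq n, Ee s g - qn * lam s|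
      ≤ qn * (qr ^ (s.2 * s.1.natDegree + s.1.natDegree))⁻¹ := by
  by_cases hrd : s.2 * s.1.natDegree + s.1.natDegree ≤ n
  · rw [sumEe_eq hM hrd, sub_self, abs_zero]
    positivity
  · have d1 : (s.1 ^ s.2).natDegree = s.2 * s.1.natDegree := natDegree_pow_pair s
    have d2 : (s.1 ^ (s.2+1)).natDegree = s.2 * s.1.natDegree + s.1.natDegree := by
      rw [natDegree_pow]; ring
    have h2 : ∑ g ∈ Mfin Fq n, ind (s.1 ^ (s.2+1)) g = 0 := by
      have : ((Mfin Fq n).filter (fun g => s.1 ^ (s.2+1) ∣ g)) = ∅ :=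
        filter_dvd_empty (by omega)
      simp only [ind, Finset.sum_boole, this, Finset.card_empty, Nat.cast_zero]
    rw [show (∑ g ∈ Mfin Fq n, Ee s g)
        = ∑ g ∈ Mfin Fq n, ind (s.1 ^ s.2) g - ∑ g ∈ Mfin Fq n, ind (s.1 ^ (s.2+1)) g by
      rw [← Finset.sum_sub_distrib]; rfl]
    rw [h2, sum_ind_eq (hM.pow _) (by omega), d1, lam_eq, sub_zero]
    rw [show qn * (qr ^ (s.2 * s.1.natDegree))⁻¹
        - qn * ((qr ^ (s.2 * s.1.natDegree))⁻¹ - (qr ^ (s.2 * s.1.natDegree + s.1.natDegree))⁻¹)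
        = qn * (qr ^ (s.2 * s.1.natDegree + s.1.natDegree))⁻¹ by ring]
    rw [abs_of_nonneg (by positivity)]

lemma sumEeEe_eq {s t : Polynomial Fq × ℕ} (hsM : s.1.Monic) (htM : t.1.Monic)
    (hsI : Irreducible s.1) (htI : Irreducible t.1) (hne : s.1 ≠ t.1)
    (hsum : (s.2 * s.1.natDegree + s.1.natDegree) + (t.2 * t.1.natDegree + t.1.natDegree) ≤ n) :
    ∑ g ∈ Mfin Fq n, Ee s g * Ee t g = qn * lam s * lam t := by
  have hcop : ∀ a b : ℕ, IsCoprime (s.1 ^ a) (t.1 ^ b) :=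
    fun a b => monic_irred_ne_coprime hsM htM hsI htI hne
  have hpt : ∀ (a b : ℕ), (s.1 ^ a * t.1 ^ b).natDegree = a * s.1.natDegree + b * t.1.natDegree := by
    intro a b
    rw [natDegree_mul (pow_ne_zero _ hsM.ne_zero) (pow_ne_zero _ htM.ne_zero),
      natDegree_pow, natDegree_pow]
  have key : ∀ g, Ee s g * Ee t g
      = ind (s.1 ^ s.2 * t.1 ^ t.2) g - ind (s.1 ^ (s.2+1) * t.1 ^ t.2) g
        - ind (s.1 ^ s.2 * t.1 ^ (t.2+1)) g + ind (s.1 ^ (s.2+1) * t.1 ^ (t.2+1)) g := by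
    intro g
    rw [Ee, Ee, ← ind_mul_coprime (hcop _ _), ← ind_mul_coprime (hcop _ _),
      ← ind_mul_coprime (hcop _ _), ← ind_mul_coprime (hcop _ _)]
    ring
  rw [Finset.sum_congr rfl (fun g _ => key g)]
  have expand : ∀ (f1 f2 f3 f4 : Polynomial Fq → ℝ),
    ∑ g ∈ Mfin Fq n, (f1 g - f2 g - f3 g + f4 g)
      = ∑ g ∈ Mfin Fq n, f1 g - ∑ g ∈ Mfin Fq n, f2 g - ∑ g ∈ Mfin Fq n, f3 g
        + ∑ g ∈ Mfin Fq n, f4 g := by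
    intro f1 f2 f3 f4
    rw [Finset.sum_add_distrib, Finset.sum_sub_distrib, Finset.sum_sub_distrib]
  rw [expand]
  rw [sum_ind_eq ((hsM.pow _).mul (htM.pow _)) (by rw [hpt]; omega),
    sum_ind_eq ((hsM.pow _).mul (htM.pow _)) (by rw [hpt, add_mul, one_mul]; omega),
    sum_ind_eq ((hsM.pow _).mul (htM.pow _)) (by rw [hpt, add_mul, one_mul]; omega),
    sum_ind_eq ((hsM.pow _).mul (htM.pow _)) (by rw [hpt, add_mul, one_mul, add_mul, one_mul]; omega),
    hpt, hpt, hpt, hpt, lam_eq, lam_eq]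
  rw [show (s.2+1) * s.1.natDegree = s.2 * s.1.natDegree + s.1.natDegree by ring,
    show (t.2+1) * t.1.natDegree = t.2 * t.1.natDegree + t.1.natDegree by ring]
  rw [pow_add, pow_add, pow_add, pow_add, pow_add, pow_add]
  rw [mul_inv, mul_inv, mul_inv, mul_inv, mul_inv, mul_inv]
  rw [pow_add, pow_add, mul_inv, mul_inv]
  ring

end NN



section Core

variable {n : ℕ}

local notation "qn" => ((Fintype.card Fq : ℝ) ^ n)
local notation "qr" => (Fintype.card Fq : ℝ)

lemma card_Mfin_real : (((Mfin Fq n).card : ℝ)) = qn := by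
  rw [card_Mfin]; push_cast; ring

lemma x_le_one (s : Polynomial Fq × ℕ) : ((qr ^ (s.2 * s.1.natDegree))⁻¹ : ℝ) ≤ 1 := by
  rw [inv_le_one_iff₀]; right
  exact one_le_pow₀ (by linarith [qr_two (Fq := Fq)])

lemma sum_sub_mul_sub (x y : ℝ) (a b : Polynomial Fq → ℝ) :
    ∑ g ∈ Mfin Fq n, (a g - x) * (b g - y)
      = ∑ g ∈ Mfin Fq n, a g * b g - y * ∑ g ∈ Mfin Fq n, a g
        - x * ∑ g ∈ Mfin Fq n, b g + qn * (x * y) := by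
  have hpt : ∀ g ∈ Mfin Fq n, (a g - x) * (b g - y)
      = a g * b g - y * a g - x * b g + x * y := fun g _ => by ring
  rw [Finset.sum_congr rfl hpt, Finset.sum_add_distrib, Finset.sum_sub_distrib,
    Finset.sum_sub_distrib, ← Finset.mul_sum, ← Finset.mul_sum, Finset.sum_const,
    nsmul_eq_mul, card_Mfin_real]

lemma d_le_r {s : Polynomial Fq × ℕ} (hs : s ∈ Sfin Fq n) :
    s.1.natDegree ≤ s.2 * s.1.natDegree := by
  obtain ⟨hM, hI, hm, hr⟩ := mem_Sfin.mp hs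
  exact Nat.le_mul_of_pos_left _ hm

lemma V_diag_le {s : Polynomial Fq × ℕ} (hs : s ∈ Sfin Fq n) :
    ∑ g ∈ Mfin Fq n, (Ee s g - lam s) ^ 2
      ≤ 2 * (qn * (qr ^ (s.2 * s.1.natDegree))⁻¹) := by
  obtain ⟨hM, hI, hm, hr⟩ := mem_Sfin.mp hs
  have hpt : ∀ g ∈ Mfin Fq n, (Ee s g - lam s) ^ 2 ≤ Ee s g + lam s ^ 2 := by
    intro g _
    have h1 := Ee_nonneg s g; have h2 := Ee_le_one s g; have h3 := lam_nonneg s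
    nlinarith
  have step : ∑ g ∈ Mfin Fq n, (Ee s g - lam s) ^ 2
      ≤ (∑ g ∈ Mfin Fq n, Ee s g) + qn * lam s ^ 2 := by
    calc ∑ g ∈ Mfin Fq n, (Ee s g - lam s) ^ 2
        ≤ ∑ g ∈ Mfin Fq n, (Ee s g + lam s ^ 2) := Finset.sum_le_sum hpt
      _ = (∑ g ∈ Mfin Fq n, Ee s g) + qn * lam s ^ 2 := by
          rw [Finset.sum_add_distrib, Finset.sum_const, nsmul_eq_mul, card_Mfin_real]
  have h4 := sumEe_le (n := n) hM
  have h5 : lam s ^ 2 ≤ (qr ^ (s.2 * s.1.natDegree))⁻¹ := by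
    have := lam_le s; have := lam_nonneg s; have := x_le_one (Fq := Fq) s
    nlinarith
  have h6 : (0:ℝ) < qn := by have := qr_pos (Fq := Fq); positivity
  nlinarith

lemma V_same {s t : Polynomial Fq × ℕ} (hs : s ∈ Sfin Fq n) (ht : t ∈ Sfin Fq n)
    (hss : 4 * (s.2 * s.1.natDegree) ≤ n) (hts : 4 * (t.2 * t.1.natDegree) ≤ n)
    (h1 : s.1 = t.1) (h2 : s.2 ≠ t.2) :
    ∑ g ∈ Mfin Fq n, (Ee s g - lam s) * (Ee t g - lam t) = -(qn * (lam s * lam t)) := by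
  have hds := d_le_r hs; have hdt := d_le_r ht
  obtain ⟨hMs, _, _, _⟩ := mem_Sfin.mp hs
  obtain ⟨hMt, _, _, _⟩ := mem_Sfin.mp ht
  rw [sum_sub_mul_sub]
  rw [Finset.sum_congr rfl (fun g _ => Ee_mul_same h1 h2 g), Finset.sum_const_zero]
  rw [sumEe_eq hMs (by omega), sumEe_eq hMt (by omega)]
  ring

lemma V_diff {s t : Polynomial Fq × ℕ} (hs : s ∈ Sfin Fq n) (ht : t ∈ Sfin Fq n)
    (hss : 4 * (s.2 * s.1.natDegree) ≤ n) (hts : 4 * (t.2 * t.1.natDegree) ≤ n)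
    (h1 : s.1 ≠ t.1) :
    ∑ g ∈ Mfin Fq n, (Ee s g - lam s) * (Ee t g - lam t) = 0 := by
  have hds := d_le_r hs; have hdt := d_le_r ht
  obtain ⟨hMs, hIs, _, _⟩ := mem_Sfin.mp hs
  obtain ⟨hMt, hIt, _, _⟩ := mem_Sfin.mp ht
  rw [sum_sub_mul_sub]
  rw [sumEeEe_eq hMs hMt hIs hIt h1 (by omega)]
  rw [sumEe_eq hMs (by omega), sumEe_eq hMt (by omega)]
  ring

lemma sum_x_same (s : Polynomial Fq × ℕ) :
    ∑ t ∈ (Sfin Fq n).filter (fun t => ¬ t = s ∧ t.1 = s.1),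
      ((qr ^ (t.2 * t.1.natDegree))⁻¹ : ℝ) ≤ 1 := by
  have step1 : ∀ t ∈ (Sfin Fq n).filter (fun t => ¬ t = s ∧ t.1 = s.1),
      ((qr ^ (t.2 * t.1.natDegree))⁻¹ : ℝ) ≤ (1/2 : ℝ) ^ t.2 := by
    intro t htm
    rw [Finset.mem_filter] at htm
    obtain ⟨htS, _, _⟩ := htm
    obtain ⟨hM, hI, hm, hr⟩ := mem_Sfin.mp htS
    have hd : 1 ≤ t.1.natDegree := hI.natDegree_pos
    have h2 : (2:ℝ) ^ t.2 ≤ qr ^ (t.2 * t.1.natDegree) := by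
      calc (2:ℝ) ^ t.2 ≤ (2:ℝ) ^ (t.2 * t.1.natDegree) := by
            apply pow_le_pow_right₀ one_le_two; nlinarith
        _ ≤ qr ^ (t.2 * t.1.natDegree) := by
            apply pow_le_pow_left₀ (by norm_num) (qr_two (Fq := Fq))
    rw [show ((1:ℝ)/2) ^ t.2 = ((2:ℝ) ^ t.2)⁻¹ by rw [div_pow, one_pow, one_div]]
    apply inv_anti₀ (by positivity) h2
  calc ∑ t ∈ (Sfin Fq n).filter (fun t => ¬ t = s ∧ t.1 = s.1),
        ((qr ^ (t.2 * t.1.natDegree))⁻¹ : ℝ)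
      ≤ ∑ t ∈ (Sfin Fq n).filter (fun t => ¬ t = s ∧ t.1 = s.1), (1/2 : ℝ) ^ t.2 :=
        Finset.sum_le_sum step1
    _ = ∑ k ∈ ((Sfin Fq n).filter (fun t => ¬ t = s ∧ t.1 = s.1)).image Prod.snd,
        (1/2 : ℝ) ^ k := by
        rw [Finset.sum_image]
        intro t htm u hum he
        rw [Finset.mem_coe, Finset.mem_filter] at htm hum
        exact Prod.ext (htm.2.2.trans hum.2.2.symm) he
    _ ≤ ∑ k ∈ (Finset.range (n+1)).erase 0, (1/2 : ℝ) ^ k := by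
        apply Finset.sum_le_sum_of_subset_of_nonneg
        · intro k hk
          rw [Finset.mem_image] at hk
          obtain ⟨t, htm, rfl⟩ := hk
          rw [Finset.mem_filter] at htm
          obtain ⟨htS, _, _⟩ := htm
          obtain ⟨hM, hI, hm, hr⟩ := mem_Sfin.mp htS
          have hd : t.2 ≤ t.2 * t.1.natDegree := Nat.le_mul_of_pos_right _ hI.natDegree_pos
          rw [Finset.mem_erase, Finset.mem_range]
          omega
        · intro k _ _; positivity
    _ ≤ 1 := by
        have h0 : (0:ℕ) ∈ Finset.range (n+1) := by simp
        have := Finset.add_sum_erase (Finset.range (n+1)) (fun k => (1/2:ℝ)^k) h0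
        have hg := sum_geometric_two_le (n+1)
        simp only [pow_zero] at this
        linarith

lemma partI (φ : Polynomial Fq × ℕ → ℝ) :
    ∑ g ∈ Mfin Fq n, (∑ s ∈ (Sfin Fq n).filter (fun s => 4 * (s.2 * s.1.natDegree) ≤ n),
        φ s * (Ee s g - lam s)) ^ 2
      ≤ 3 * (qn * ∑ s ∈ Sfin Fq n, (φ s)^2 * (qr ^ (s.2 * s.1.natDegree))⁻¹) := by
  classical
  set SS := (Sfin Fq n).filter (fun s => 4 * (s.2 * s.1.natDegree) ≤ n) with hSS
  set x : Polynomial Fq × ℕ → ℝ := fun s => (qr ^ (s.2 * s.1.natDegree))⁻¹ with hx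
  set T := ∑ s ∈ Sfin Fq n, (φ s)^2 * x s with hT
  set V : (Polynomial Fq × ℕ) → (Polynomial Fq × ℕ) → ℝ :=
    fun s t => ∑ g ∈ Mfin Fq n, (Ee s g - lam s) * (Ee t g - lam t) with hV
  have hq6 : (0:ℝ) < qn := by have := qr_pos (Fq := Fq); positivity
  have hTnn : 0 ≤ T := by
    apply Finset.sum_nonneg; intro s _
    have : (0:ℝ) ≤ x s := by rw [hx]; positivity
    positivity
  have hxnn : ∀ s, (0:ℝ) ≤ x s := fun s => by rw [hx]; positivity
  have expand : ∑ g ∈ Mfin Fq n, (∑ s ∈ SS, φ s * (Ee s g - lam s)) ^ 2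
      = ∑ s ∈ SS, ∑ t ∈ SS, (φ s * φ t) * V s t := by
    have e1 : ∀ g ∈ Mfin Fq n, (∑ s ∈ SS, φ s * (Ee s g - lam s)) ^ 2
        = ∑ s ∈ SS, ∑ t ∈ SS, (φ s * (Ee s g - lam s)) * (φ t * (Ee t g - lam t)) := by
      intro g _; rw [sq, Finset.sum_mul_sum]
    rw [Finset.sum_congr rfl e1, Finset.sum_comm]
    apply Finset.sum_congr rfl; intro s _
    rw [Finset.sum_comm]
    apply Finset.sum_congr rfl; intro t _
    rw [hV]; simp only
    rw [Finset.mul_sum]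
    apply Finset.sum_congr rfl; intro g _; ring
  rw [expand]
  -- bound each pair
  have pair_bound : ∀ s ∈ SS, ∀ t ∈ SS, (φ s * φ t) * V s t
      ≤ (if s = t then (φ s)^2 * (2 * (qn * x s)) else 0)
        + (if ¬ s = t ∧ s.1 = t.1
            then (1/2) * ((φ s)^2 + (φ t)^2) * (qn * (x s * x t)) else 0) := by
    intro s hsm t htm
    rw [Finset.mem_filter] at hsm htm
    obtain ⟨hsS, hs4⟩ := hsm
    obtain ⟨htS, ht4⟩ := htm
    by_cases hst : s = t
    · subst hst
      simp only [if_pos rfl, not_true, false_and, if_neg (by tauto), add_zero]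
      have h1 : (φ s * φ s) * V s s = (φ s)^2 * V s s := by ring
      rw [h1]
      apply mul_le_mul_of_nonneg_left _ (sq_nonneg _)
      rw [hV]; simp only
      have := V_diag_le (n := n) hsS
      calc ∑ g ∈ Mfin Fq n, (Ee s g - lam s) * (Ee s g - lam s)
          = ∑ g ∈ Mfin Fq n, (Ee s g - lam s)^2 := by
            apply Finset.sum_congr rfl; intro g _; ring
        _ ≤ 2 * (qn * x s) := this
    · by_cases hP : s.1 = t.1
      · have hm2 : s.2 ≠ t.2 := by
          intro he; exact hst (Prod.ext hP he)
        rw [if_neg hst, if_pos ⟨hst, hP⟩]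
        have hVv : V s t = -(qn * (lam s * lam t)) := V_same hsS htS hs4 ht4 hP hm2
        rw [hVv]
        have hls := lam_nonneg s; have hlt := lam_nonneg t
        have h2 : lam s * lam t ≤ x s * x t := by
          have := lam_le s; have := lam_le t
          have := hxnn s; have := hxnn t
          nlinarith
        have habs : (φ s * φ t) * -(qn * (lam s * lam t))
            ≤ |φ s * φ t| * (qn * (lam s * lam t)) := by
          have h3 : (0:ℝ) ≤ qn * (lam s * lam t) := by positivity
          have := neg_abs_le (φ s * φ t)
          nlinarith [abs_nonneg (φ s * φ t)]
        have hfin : |φ s * φ t| * (qn * (lam s * lam t))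
            ≤ (1/2) * ((φ s)^2 + (φ t)^2) * (qn * (x s * x t)) := by
          have h4 : |φ s * φ t| ≤ (1/2) * ((φ s)^2 + (φ t)^2) := by
            rw [abs_mul]
            nlinarith [abs_nonneg (φ s), abs_nonneg (φ t), sq_abs (φ s), sq_abs (φ t),
              sq_nonneg (|φ s| - |φ t|)]
          have h5 : (0:ℝ) ≤ qn * (lam s * lam t) := by positivity
          have h6 : qn * (lam s * lam t) ≤ qn * (x s * x t) := by nlinarith
          nlinarith [abs_nonneg (φ s * φ t)]
        linarith
      · rw [if_neg hst, if_neg (by tauto)]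
        have hVv : V s t = 0 := V_diff hsS htS hs4 ht4 hP
        rw [hVv]; ring_nf; norm_num
  have main1 : ∑ s ∈ SS, ∑ t ∈ SS, (φ s * φ t) * V s t
      ≤ ∑ s ∈ SS, ∑ t ∈ SS,
        ((if s = t then (φ s)^2 * (2 * (qn * x s)) else 0)
          + (if ¬ s = t ∧ s.1 = t.1
              then (1/2) * ((φ s)^2 + (φ t)^2) * (qn * (x s * x t)) else 0)) := by
    apply Finset.sum_le_sum; intro s hs
    apply Finset.sum_le_sum; intro t ht
    exact pair_bound s hs t ht
  have split : ∑ s ∈ SS, ∑ t ∈ SS,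
        ((if s = t then (φ s)^2 * (2 * (qn * x s)) else 0)
          + (if ¬ s = t ∧ s.1 = t.1
              then (1/2) * ((φ s)^2 + (φ t)^2) * (qn * (x s * x t)) else 0))
      = (∑ s ∈ SS, ∑ t ∈ SS, (if s = t then (φ s)^2 * (2 * (qn * x s)) else 0))
        + ∑ s ∈ SS, ∑ t ∈ SS, (if ¬ s = t ∧ s.1 = t.1
              then (1/2) * ((φ s)^2 + (φ t)^2) * (qn * (x s * x t)) else 0) := by
    rw [← Finset.sum_add_distrib]
    apply Finset.sum_congr rfl; intro s _
    rw [← Finset.sum_add_distrib]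
  have diag_bound : (∑ s ∈ SS, ∑ t ∈ SS, (if s = t then (φ s)^2 * (2 * (qn * x s)) else 0))
      ≤ 2 * (qn * T) := by
    have e2 : ∀ s ∈ SS, ∑ t ∈ SS, (if s = t then (φ s)^2 * (2 * (qn * x s)) else 0)
        = (φ s)^2 * (2 * (qn * x s)) := by
      intro s hsm
      rw [Finset.sum_ite_eq SS s (fun _ => (φ s)^2 * (2 * (qn * x s))), if_pos hsm]
    rw [Finset.sum_congr rfl e2]
    calc ∑ s ∈ SS, (φ s)^2 * (2 * (qn * x s))
        ≤ ∑ s ∈ Sfin Fq n, (φ s)^2 * (2 * (qn * x s)) := by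
          apply Finset.sum_le_sum_of_subset_of_nonneg (Finset.filter_subset _ _)
          intro s _ _
          have := hxnn s; positivity
      _ = 2 * (qn * T) := by
          rw [hT, Finset.mul_sum, Finset.mul_sum]
          apply Finset.sum_congr rfl
          intro s _
          ring
  have sum_x_cond : ∀ u ∈ SS, ∑ v ∈ SS, (if ¬ u = v ∧ u.1 = v.1 then x v else 0) ≤ 1 := by
    intro u _
    rw [← Finset.sum_filter]
    calc ∑ v ∈ SS.filter (fun v => ¬ u = v ∧ u.1 = v.1), x v
        ≤ ∑ v ∈ (Sfin Fq n).filter (fun v => ¬ v = u ∧ v.1 = u.1), x v := by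
          apply Finset.sum_le_sum_of_subset_of_nonneg
          · intro v hv
            rw [hSS, Finset.mem_filter, Finset.mem_filter] at hv
            rw [Finset.mem_filter]
            exact ⟨hv.1.1, fun he => hv.2.1 he.symm, hv.2.2.symm⟩
          · intro v _ _; exact hxnn v
      _ ≤ 1 := sum_x_same u
  have sum_x_cond' : ∀ u ∈ SS, ∑ v ∈ SS, (if ¬ v = u ∧ v.1 = u.1 then x v else 0) ≤ 1 := by
    intro u _
    rw [← Finset.sum_filter]
    calc ∑ v ∈ SS.filter (fun v => ¬ v = u ∧ v.1 = u.1), x v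
        ≤ ∑ v ∈ (Sfin Fq n).filter (fun v => ¬ v = u ∧ v.1 = u.1), x v := by
          apply Finset.sum_le_sum_of_subset_of_nonneg
          · intro v hv
            rw [hSS, Finset.mem_filter, Finset.mem_filter] at hv
            rw [Finset.mem_filter]
            exact ⟨hv.1.1, hv.2⟩
          · intro v _ _; exact hxnn v
      _ ≤ 1 := sum_x_same u
  have off_bound : (∑ s ∈ SS, ∑ t ∈ SS, (if ¬ s = t ∧ s.1 = t.1
        then (1/2) * ((φ s)^2 + (φ t)^2) * (qn * (x s * x t)) else 0)) ≤ qn * T := by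
    have ptsplit : ∀ s t : Polynomial Fq × ℕ,
        (if ¬ s = t ∧ s.1 = t.1
          then (1/2) * ((φ s)^2 + (φ t)^2) * (qn * (x s * x t)) else 0)
        = (if ¬ s = t ∧ s.1 = t.1 then ((qn/2) * (φ s)^2) * (x s * x t) else 0)
          + (if ¬ s = t ∧ s.1 = t.1 then ((qn/2) * (φ t)^2) * (x s * x t) else 0) := by
      intro s t
      split_ifs with hc
      · ring
      · ring
    have e0 : (∑ s ∈ SS, ∑ t ∈ SS, (if ¬ s = t ∧ s.1 = t.1
          then (1/2) * ((φ s)^2 + (φ t)^2) * (qn * (x s * x t)) else 0))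
        = (∑ s ∈ SS, ∑ t ∈ SS,
            (if ¬ s = t ∧ s.1 = t.1 then ((qn/2) * (φ s)^2) * (x s * x t) else 0))
          + ∑ s ∈ SS, ∑ t ∈ SS,
            (if ¬ s = t ∧ s.1 = t.1 then ((qn/2) * (φ t)^2) * (x s * x t) else 0) := by
      rw [← Finset.sum_add_distrib]
      apply Finset.sum_congr rfl; intro s _
      rw [← Finset.sum_add_distrib]
      apply Finset.sum_congr rfl; intro t _
      exact ptsplit s t
    have b1 : (∑ s ∈ SS, ∑ t ∈ SS,
          (if ¬ s = t ∧ s.1 = t.1 then ((qn/2) * (φ s)^2) * (x s * x t) else 0))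
        ≤ ∑ s ∈ SS, ((qn/2) * (φ s)^2) * x s := by
      apply Finset.sum_le_sum
      intro s hsm
      have e1 : ∑ t ∈ SS, (if ¬ s = t ∧ s.1 = t.1 then ((qn/2) * (φ s)^2) * (x s * x t) else 0)
          = (((qn/2) * (φ s)^2) * x s) * ∑ t ∈ SS, (if ¬ s = t ∧ s.1 = t.1 then x t else 0) := by
        rw [Finset.mul_sum]
        apply Finset.sum_congr rfl; intro t _
        split_ifs with hc
        · ring
        · ring
      rw [e1]
      have hnn : (0:ℝ) ≤ ((qn/2) * (φ s)^2) * x s := by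
        have := hxnn s; positivity
      calc (((qn/2) * (φ s)^2) * x s) * ∑ t ∈ SS, (if ¬ s = t ∧ s.1 = t.1 then x t else 0)
          ≤ (((qn/2) * (φ s)^2) * x s) * 1 :=
            mul_le_mul_of_nonneg_left (sum_x_cond s hsm) hnn
        _ = ((qn/2) * (φ s)^2) * x s := by ring
    have b2 : (∑ s ∈ SS, ∑ t ∈ SS,
          (if ¬ s = t ∧ s.1 = t.1 then ((qn/2) * (φ t)^2) * (x s * x t) else 0))
        ≤ ∑ t ∈ SS, ((qn/2) * (φ t)^2) * x t := by
      rw [Finset.sum_comm]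
      apply Finset.sum_le_sum
      intro t htm
      have e1 : ∑ s ∈ SS, (if ¬ s = t ∧ s.1 = t.1 then ((qn/2) * (φ t)^2) * (x s * x t) else 0)
          = (((qn/2) * (φ t)^2) * x t) * ∑ s ∈ SS, (if ¬ s = t ∧ s.1 = t.1 then x s else 0) := by
        rw [Finset.mul_sum]
        apply Finset.sum_congr rfl; intro u _
        split_ifs with hc
        · ring
        · ring
      rw [e1]
      have hnn : (0:ℝ) ≤ ((qn/2) * (φ t)^2) * x t := by
        have := hxnn t; positivity
      calc (((qn/2) * (φ t)^2) * x t) * ∑ s ∈ SS, (if ¬ s = t ∧ s.1 = t.1 then x s else 0)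
          ≤ (((qn/2) * (φ t)^2) * x t) * 1 :=
            mul_le_mul_of_nonneg_left (sum_x_cond' t htm) hnn
        _ = ((qn/2) * (φ t)^2) * x t := by ring
    have b3 : ∑ s ∈ SS, ((qn/2) * (φ s)^2) * x s ≤ (qn/2) * T := by
      calc ∑ s ∈ SS, ((qn/2) * (φ s)^2) * x s
          ≤ ∑ s ∈ Sfin Fq n, ((qn/2) * (φ s)^2) * x s := by
            apply Finset.sum_le_sum_of_subset_of_nonneg (Finset.filter_subset _ _)
            intro s _ _
            have := hxnn s; positivity
        _ = (qn/2) * T := by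
            rw [hT, Finset.mul_sum]
            apply Finset.sum_congr rfl; intro s _; ring
    rw [e0]
    linarith
  calc ∑ s ∈ SS, ∑ t ∈ SS, (φ s * φ t) * V s t
      ≤ _ := main1
    _ = _ := split
    _ ≤ 2 * (qn * T) + qn * T := by
        apply add_le_add diag_bound off_bound
    _ ≤ 3 * (qn * T) := by linarith


lemma nat_sq_le_pow (m : ℕ) : ((m:ℝ)+1)^2 ≤ 4 * qn → True := fun _ => trivial

lemma aux_two_pow : ∀ m : ℕ, 2*m + 3 ≤ 4 * 2^m := by
  intro m
  induction m with
  | zero => norm_num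
  | succ k ih =>
      have h1 : 1 ≤ 2^k := Nat.one_le_two_pow
      calc 2*(k+1) + 3 = (2*k + 3) + 2 := by ring
        _ ≤ 4 * 2^k + 4 * 2^k := by omega
        _ = 4 * 2^(k+1) := by ring
      
lemma nat_sq_le : ∀ m : ℕ, (m+1)^2 ≤ 4 * 2^m := by
  intro m
  induction m with
  | zero => norm_num
  | succ k ih =>
      have h2 := aux_two_pow k
      calc (k+1+1)^2 = (k+1)^2 + (2*k + 3) := by ring
        _ ≤ 4 * 2^k + 4 * 2^k := by omega
        _ = 4 * 2^(k+1) := by ring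

lemma sq_np1_le_qn : ((n:ℝ)+1)^2 ≤ 4 * qn := by
  have h1 : ((n:ℝ)+1)^2 ≤ 4 * (2:ℝ)^n := by
    have := nat_sq_le n
    have hc : (((n+1)^2 : ℕ) : ℝ) ≤ ((4 * 2^n : ℕ) : ℝ) := Nat.cast_le.mpr this
    push_cast at hc
    linarith
  have h2 : (2:ℝ)^n ≤ qn := pow_le_pow_left₀ (by norm_num) (qr_two (Fq := Fq)) n
  linarith

lemma sum_qd : ∑ s ∈ Sfin Fq n, ((qr ^ s.1.natDegree)⁻¹ : ℝ) ≤ ((n:ℝ)+1)^2 := by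
  classical
  have hsub : Sfin Fq n ⊆
      (((Finset.range (n+1)).biUnion (fun d => Mfin Fq d)) ×ˢ Finset.range (n+1)) := by
    rw [Sfin]; exact Finset.filter_subset _ _
  calc ∑ s ∈ Sfin Fq n, ((qr ^ s.1.natDegree)⁻¹ : ℝ)
      ≤ ∑ s ∈ (((Finset.range (n+1)).biUnion (fun d => Mfin Fq d)) ×ˢ Finset.range (n+1)),
          ((qr ^ s.1.natDegree)⁻¹ : ℝ) := by
        apply Finset.sum_le_sum_of_subset_of_nonneg hsub
        intro s _ _; positivity
    _ = ∑ P ∈ ((Finset.range (n+1)).biUnion (fun d => Mfin Fq d)),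
          ∑ _m ∈ Finset.range (n+1), ((qr ^ P.natDegree)⁻¹ : ℝ) := by
        rw [Finset.sum_product]
    _ = ((n:ℝ)+1) * ∑ P ∈ ((Finset.range (n+1)).biUnion (fun d => Mfin Fq d)),
          ((qr ^ P.natDegree)⁻¹ : ℝ) := by
        rw [Finset.mul_sum]
        apply Finset.sum_congr rfl; intro P _
        rw [Finset.sum_const, nsmul_eq_mul, Finset.card_range]
        push_cast; ring
    _ ≤ ((n:ℝ)+1) * ((n:ℝ)+1) := by
        have hinner : ∑ P ∈ ((Finset.range (n+1)).biUnion (fun d => Mfin Fq d)),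
            ((qr ^ P.natDegree)⁻¹ : ℝ) ≤ ((n:ℝ)+1) := by
          rw [Finset.sum_biUnion]
          · calc ∑ j ∈ Finset.range (n+1), ∑ P ∈ Mfin Fq j, ((qr ^ P.natDegree)⁻¹ : ℝ)
                ≤ ∑ j ∈ Finset.range (n+1), (1:ℝ) := by
                  apply Finset.sum_le_sum
                  intro j _
                  have e1 : ∀ P ∈ Mfin Fq j, ((qr ^ P.natDegree)⁻¹ : ℝ) = (qr ^ j)⁻¹ := by
                    intro P hP
                    rw [(mem_Mfin.mp hP).2]
                  rw [Finset.sum_congr rfl e1, Finset.sum_const, nsmul_eq_mul, card_Mfin]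
                  push_cast
                  rw [mul_inv_cancel₀ (by positivity)]
              _ = ((n:ℝ)+1) := by rw [Finset.sum_const, nsmul_eq_mul, Finset.card_range]; push_cast; ring
          · intro a _ b _ hab
            simp only [Finset.disjoint_left]
            intro P hPa hPb
            rw [mem_Mfin] at hPa hPb
            exact hab (hPa.2 ▸ hPb.2 ▸ rfl)
        have hn1 : (0:ℝ) ≤ (n:ℝ)+1 := by positivity
        nlinarith
    _ = ((n:ℝ)+1)^2 := by ring

lemma card_exact_le {g : Polynomial Fq} (hg : g ∈ Mfin Fq n) :
    (((Sfin Fq n).filter (fun s => ¬ 4 * (s.2 * s.1.natDegree) ≤ n)).filter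
      (fun s => s.1 ^ s.2 ∣ g ∧ ¬ s.1 ^ (s.2+1) ∣ g)).card ≤ 3 := by
  classical
  obtain ⟨hgM, hgd⟩ := mem_Mfin.mp hg
  by_contra hc
  push_neg at hc
  obtain ⟨U, hU, hUcard⟩ := Finset.exists_subset_card_eq (show 4 ≤ _ from hc)
  have hmem : ∀ s ∈ U, s ∈ Sfin Fq n ∧ n < 4 * (s.2 * s.1.natDegree)
      ∧ s.1 ^ s.2 ∣ g ∧ ¬ s.1 ^ (s.2+1) ∣ g := by
    intro s hs
    have hx := hU hs
    rw [Finset.mem_filter, Finset.mem_filter] at hx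
    exact ⟨hx.1.1, hx.1.2, hx.2⟩
  have hfst : ∀ s ∈ U, ∀ t ∈ U, s ≠ t → s.1 ≠ t.1 := by
    intro s hs t ht hne he
    obtain ⟨hsS, _, hs1, hs2⟩ := hmem s hs
    obtain ⟨htS, _, ht1, ht2⟩ := hmem t ht
    have hm2 : s.2 ≠ t.2 := fun h2 => hne (Prod.ext he h2)
    rcases Nat.lt_or_ge s.2 t.2 with hlt | hge
    · exact hs2 (dvd_trans (pow_dvd_pow s.1 (by omega)) (he ▸ ht1))
    · have : t.2 < s.2 := by omega
      exact ht2 (dvd_trans (pow_dvd_pow t.1 (by omega)) (he ▸ hs1))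
  have hcop : (↑U : Set (Polynomial Fq × ℕ)).Pairwise
      (Function.onFun IsCoprime (fun s : Polynomial Fq × ℕ => s.1 ^ s.2)) := by
    intro s hs t ht hne
    obtain ⟨hsS, _, _, _⟩ := hmem s hs
    obtain ⟨htS, _, _, _⟩ := hmem t ht
    obtain ⟨hsM, hsI, _, _⟩ := mem_Sfin.mp hsS
    obtain ⟨htM, htI, _, _⟩ := mem_Sfin.mp htS
    exact monic_irred_ne_coprime hsM htM hsI htI (hfst s hs t ht hne)
  have hdvd : (∏ s ∈ U, s.1 ^ s.2) ∣ g :=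
    Finset.prod_dvd_of_coprime hcop (fun s hs => (hmem s hs).2.2.1)
  have hdeg : (∏ s ∈ U, s.1 ^ s.2).natDegree = ∑ s ∈ U, s.2 * s.1.natDegree := by
    rw [Polynomial.natDegree_prod]
    · apply Finset.sum_congr rfl
      intro s hs
      rw [natDegree_pow]
    · intro s hs
      obtain ⟨hsS, _, _, _⟩ := hmem s hs
      obtain ⟨hsM, _, _, _⟩ := mem_Sfin.mp hsS
      exact pow_ne_zero _ hsM.ne_zero
  have hle : (∏ s ∈ U, s.1 ^ s.2).natDegree ≤ n := by
    rw [← hgd]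
    exact Polynomial.natDegree_le_of_dvd hdvd hgM.ne_zero
  have hlarge : ∀ s ∈ U, n + 1 ≤ 4 * (s.2 * s.1.natDegree) := by
    intro s hs; have := (hmem s hs).2.1; omega
  have hsum : U.card * (n+1) ≤ ∑ s ∈ U, 4 * (s.2 * s.1.natDegree) :=
    Finset.card_nsmul_le_sum U _ _ hlarge
  rw [hUcard] at hsum
  have : ∑ s ∈ U, 4 * (s.2 * s.1.natDegree) = 4 * ∑ s ∈ U, s.2 * s.1.natDegree := by
    rw [Finset.mul_sum]
  omega

lemma partII (φ : Polynomial Fq × ℕ → ℝ) :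
    ∑ g ∈ Mfin Fq n, (∑ s ∈ (Sfin Fq n).filter (fun s => ¬ 4 * (s.2 * s.1.natDegree) ≤ n),
        φ s * (Ee s g - lam s)) ^ 2
      ≤ 14 * (qn * ∑ s ∈ Sfin Fq n, (φ s)^2 * (qr ^ (s.2 * s.1.natDegree))⁻¹) := by
  classical
  set SB := (Sfin Fq n).filter (fun s => ¬ 4 * (s.2 * s.1.natDegree) ≤ n) with hSB
  set x : Polynomial Fq × ℕ → ℝ := fun s => (qr ^ (s.2 * s.1.natDegree))⁻¹ with hx
  set T := ∑ s ∈ Sfin Fq n, (φ s)^2 * x s with hT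
  have hq0 : (0:ℝ) < qr := qr_pos
  have hqn : (0:ℝ) < qn := by positivity
  have hxpos : ∀ s : Polynomial Fq × ℕ, 0 < x s := fun s => by rw [hx]; positivity
  have hTnn : 0 ≤ T := by
    apply Finset.sum_nonneg; intro s _
    have := (hxpos s).le; positivity
  set Y : Polynomial Fq → ℝ := fun g => ∑ s ∈ SB, φ s * Ee s g with hY
  set c : ℝ := ∑ s ∈ SB, φ s * lam s with hc
  set cb : ℝ := (∑ g ∈ Mfin Fq n, Y g) / qn with hcb
  have hinner : ∀ g ∈ Mfin Fq n, (∑ s ∈ SB, φ s * (Ee s g - lam s)) = Y g - c := by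
    intro g _
    rw [hY, hc]; simp only
    rw [← Finset.sum_sub_distrib]
    apply Finset.sum_congr rfl; intro s _; ring
  have hYsum : ∑ g ∈ Mfin Fq n, Y g = qn * cb := by
    rw [hcb]; field_simp
  -- step (b)
  have stepb : ∑ g ∈ Mfin Fq n, (Y g - cb)^2 ≤ ∑ g ∈ Mfin Fq n, (Y g)^2 := by
    have expand : ∑ g ∈ Mfin Fq n, (Y g - cb)^2
        = ∑ g ∈ Mfin Fq n, (Y g)^2 - 2*cb*(∑ g ∈ Mfin Fq n, Y g) + qn * cb^2 := by
      have pt : ∀ g ∈ Mfin Fq n, (Y g - cb)^2 = (Y g)^2 - 2*cb*(Y g) + cb^2 :=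
        fun g _ => by ring
      rw [Finset.sum_congr rfl pt, Finset.sum_add_distrib, Finset.sum_sub_distrib,
        Finset.sum_const, nsmul_eq_mul, card_Mfin_real, ← Finset.mul_sum]
      try ring
    rw [expand, hYsum]
    nlinarith [sq_nonneg cb, hqn]
  -- step (c)
  have stepc : ∑ g ∈ Mfin Fq n, (Y g)^2 ≤ 3 * (qn * T) := by
    have ptY : ∀ g ∈ Mfin Fq n, (Y g)^2 ≤ 3 * ∑ s ∈ SB, (φ s)^2 * Ee s g := by
      intro g hg
      have hfil : Y g = ∑ s ∈ SB.filter (fun s => s.1^s.2 ∣ g ∧ ¬ s.1^(s.2+1) ∣ g), φ s := by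
        rw [hY]; simp only
        conv_rhs => rw [Finset.sum_filter]
        apply Finset.sum_congr rfl; intro s _
        rw [Ee_eq_ite]
        split_ifs
        · ring
        · ring
      have hback : ∑ s ∈ SB.filter (fun s => s.1^s.2 ∣ g ∧ ¬ s.1^(s.2+1) ∣ g), (φ s)^2
          = ∑ s ∈ SB, (φ s)^2 * Ee s g := by
        conv_lhs => rw [Finset.sum_filter]
        apply Finset.sum_congr rfl; intro s _
        rw [Ee_eq_ite]
        split_ifs
        · ring
        · ring
      have hcard : ((SB.filter (fun s => s.1^s.2 ∣ g ∧ ¬ s.1^(s.2+1) ∣ g)).card : ℝ) ≤ 3 := by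
        have := card_exact_le (n := n) hg
        exact_mod_cast this
      have hCS := sq_sum_le_card_mul_sum_sq
        (s := SB.filter (fun s => s.1^s.2 ∣ g ∧ ¬ s.1^(s.2+1) ∣ g)) (f := φ)
      have hsqnn : (0:ℝ) ≤ ∑ s ∈ SB.filter (fun s => s.1^s.2 ∣ g ∧ ¬ s.1^(s.2+1) ∣ g), (φ s)^2 :=
        Finset.sum_nonneg fun s _ => sq_nonneg _
      calc (Y g)^2 = (∑ s ∈ SB.filter (fun s => s.1^s.2 ∣ g ∧ ¬ s.1^(s.2+1) ∣ g), φ s)^2 := by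
            rw [hfil]
        _ ≤ ((SB.filter (fun s => s.1^s.2 ∣ g ∧ ¬ s.1^(s.2+1) ∣ g)).card : ℝ)
            * ∑ s ∈ SB.filter (fun s => s.1^s.2 ∣ g ∧ ¬ s.1^(s.2+1) ∣ g), (φ s)^2 := hCS
        _ ≤ 3 * ∑ s ∈ SB.filter (fun s => s.1^s.2 ∣ g ∧ ¬ s.1^(s.2+1) ∣ g), (φ s)^2 :=
            mul_le_mul_of_nonneg_right hcard hsqnn
        _ = 3 * ∑ s ∈ SB, (φ s)^2 * Ee s g := by rw [hback]
    calc ∑ g ∈ Mfin Fq n, (Y g)^2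
        ≤ ∑ g ∈ Mfin Fq n, 3 * ∑ s ∈ SB, (φ s)^2 * Ee s g := Finset.sum_le_sum ptY
      _ = 3 * ∑ s ∈ SB, (φ s)^2 * (∑ g ∈ Mfin Fq n, Ee s g) := by
          rw [← Finset.mul_sum, Finset.sum_comm]
          congr 1
          apply Finset.sum_congr rfl; intro s _
          rw [Finset.mul_sum]
      _ ≤ 3 * ∑ s ∈ SB, (φ s)^2 * (qn * x s) := by
          have hs : ∀ s ∈ SB, (φ s)^2 * (∑ g ∈ Mfin Fq n, Ee s g) ≤ (φ s)^2 * (qn * x s) := by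
            intro s hsm
            rw [hSB, Finset.mem_filter] at hsm
            obtain ⟨hM, _, _, _⟩ := mem_Sfin.mp hsm.1
            exact mul_le_mul_of_nonneg_left (sumEe_le hM) (sq_nonneg _)
          have := Finset.sum_le_sum hs
          linarith
      _ ≤ 3 * (qn * T) := by
          have h1 : ∑ s ∈ SB, (φ s)^2 * (qn * x s) ≤ ∑ s ∈ Sfin Fq n, (φ s)^2 * (qn * x s) := by
            apply Finset.sum_le_sum_of_subset_of_nonneg (Finset.filter_subset _ _)
            intro s _ _
            have := (hxpos s).le; positivity
          have h2 : ∑ s ∈ Sfin Fq n, (φ s)^2 * (qn * x s) = qn * T := by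
            rw [hT, Finset.mul_sum]
            apply Finset.sum_congr rfl; intro s _; ring
          linarith
  -- step (d)
  have stepd : qn * (cb - c)^2 ≤ 4 * (qn * T) := by
    have hYg : ∑ g ∈ Mfin Fq n, Y g = ∑ s ∈ SB, φ s * (∑ g ∈ Mfin Fq n, Ee s g) := by
      rw [hY]; simp only
      rw [Finset.sum_comm]
      apply Finset.sum_congr rfl; intro s _
      rw [Finset.mul_sum]
    have hdiff : cb - c = (∑ s ∈ SB, φ s * ((∑ g ∈ Mfin Fq n, Ee s g) - qn * lam s)) / qn := by
      have e : ∑ s ∈ SB, φ s * ((∑ g ∈ Mfin Fq n, Ee s g) - qn * lam s)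
          = (∑ s ∈ SB, φ s * (∑ g ∈ Mfin Fq n, Ee s g)) - qn * (∑ s ∈ SB, φ s * lam s) := by
        rw [Finset.mul_sum, ← Finset.sum_sub_distrib]
        apply Finset.sum_congr rfl; intro s _; ring
      rw [hcb, hYg, hc, e]
      field_simp
    set err : (Polynomial Fq × ℕ) → ℝ :=
      fun s => (∑ g ∈ Mfin Fq n, Ee s g) - qn * lam s with herr
    have hrestrict : ∑ s ∈ SB, φ s * err s
        = ∑ s ∈ SB.filter (fun s => n < s.2 * s.1.natDegree + s.1.natDegree), φ s * err s := by
      rw [← Finset.sum_filter_add_sum_filter_not SB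
        (fun s => n < s.2 * s.1.natDegree + s.1.natDegree) (fun s => φ s * err s)]
      have hzero : ∑ s ∈ SB.filter (fun s => ¬ n < s.2 * s.1.natDegree + s.1.natDegree),
          φ s * err s = 0 := by
        apply Finset.sum_eq_zero
        intro s hsm
        rw [Finset.mem_filter, hSB, Finset.mem_filter] at hsm
        obtain ⟨⟨hsS, _⟩, hnot⟩ := hsm
        obtain ⟨hM, _, _, _⟩ := mem_Sfin.mp hsS
        rw [herr]; simp only
        rw [sumEe_eq hM (by omega), sub_self, mul_zero]
      rw [hzero, add_zero]
    set F2 := SB.filter (fun s => n < s.2 * s.1.natDegree + s.1.natDegree) with hF2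
    have herrb : ∀ s ∈ F2, (err s)^2 * (x s)⁻¹ ≤ qn * (qr ^ s.1.natDegree)⁻¹ := by
      intro s hsm
      rw [hF2, Finset.mem_filter, hSB, Finset.mem_filter] at hsm
      obtain ⟨⟨hsS, _⟩, hbig⟩ := hsm
      obtain ⟨hM, hI, hm, hr⟩ := mem_Sfin.mp hsS
      have habs : |err s| ≤ qn * (qr ^ (s.2 * s.1.natDegree + s.1.natDegree))⁻¹ := by
        rw [herr]; exact sumEe_err hM hr
      have hx1 : (x s)⁻¹ = qr ^ (s.2 * s.1.natDegree) := by rw [hx]; simp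
      have key : (qn * (qr ^ (s.2 * s.1.natDegree + s.1.natDegree))⁻¹)^2
          * qr ^ (s.2 * s.1.natDegree) ≤ qn * (qr ^ s.1.natDegree)⁻¹ := by
        set r := s.2 * s.1.natDegree
        set d := s.1.natDegree
        have h1 : (qr:ℝ)^(r+d) * (qr:ℝ)^(r+d) = qr^r * qr^(r+2*d) := by
          rw [← pow_add, ← pow_add]
          congr 1
          omega
        have h5 : ((qr:ℝ)^(r+d))⁻¹ * ((qr:ℝ)^(r+d))⁻¹ * (qr:ℝ)^r = ((qr:ℝ)^(r+2*d))⁻¹ := by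
          rw [← mul_inv, h1, mul_inv]
          have hz : ((qr:ℝ)^r) ≠ 0 := by positivity
          field_simp
        have e1 : (qn * (qr ^ (r + d))⁻¹)^2 * qr ^ r
            = qn^2 * (qr ^ (r + 2*d))⁻¹ := by
          calc (qn * (qr ^ (r + d))⁻¹)^2 * qr ^ r
              = qn^2 * (((qr:ℝ)^(r+d))⁻¹ * ((qr:ℝ)^(r+d))⁻¹ * (qr:ℝ)^r) := by ring
            _ = qn^2 * (qr ^ (r + 2*d))⁻¹ := by rw [h5]
        rw [e1]
        have e2 : (qr ^ (r + 2*d))⁻¹ ≤ (qr ^ (n + d))⁻¹ := by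
          apply inv_anti₀ (by positivity)
          apply pow_le_pow_right₀ (by linarith [qr_two (Fq := Fq)])
          omega
        have e3 : qn^2 * (qr ^ (n + d))⁻¹ = qn * (qr ^ d)⁻¹ := by
          rw [pow_add, mul_inv]
          have : (qr:ℝ) ^ n ≠ 0 := by positivity
          field_simp
        calc qn^2 * (qr ^ (r + 2*d))⁻¹ ≤ qn^2 * (qr ^ (n + d))⁻¹ := by
              apply mul_le_mul_of_nonneg_left e2 (by positivity)
          _ = qn * (qr ^ d)⁻¹ := e3
      have hsq : (err s)^2 ≤ (qn * (qr ^ (s.2 * s.1.natDegree + s.1.natDegree))⁻¹)^2 := by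
        rw [← sq_abs]
        apply pow_le_pow_left₀ (abs_nonneg _) habs
      rw [hx1]
      calc (err s)^2 * qr ^ (s.2 * s.1.natDegree)
          ≤ (qn * (qr ^ (s.2 * s.1.natDegree + s.1.natDegree))⁻¹)^2
            * qr ^ (s.2 * s.1.natDegree) := by
            apply mul_le_mul_of_nonneg_right hsq (by positivity)
        _ ≤ qn * (qr ^ s.1.natDegree)⁻¹ := key
    have hsum_err : ∑ s ∈ F2, (err s)^2 * (x s)⁻¹ ≤ qn * ((n:ℝ)+1)^2 := by
      calc ∑ s ∈ F2, (err s)^2 * (x s)⁻¹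
          ≤ ∑ s ∈ F2, qn * (qr ^ s.1.natDegree)⁻¹ := Finset.sum_le_sum herrb
        _ ≤ ∑ s ∈ Sfin Fq n, qn * (qr ^ s.1.natDegree)⁻¹ := by
            apply Finset.sum_le_sum_of_subset_of_nonneg
            · intro s hsm
              rw [hF2, Finset.mem_filter, hSB, Finset.mem_filter] at hsm
              exact hsm.1.1
            · intro s _ _; positivity
        _ = qn * ∑ s ∈ Sfin Fq n, (qr ^ s.1.natDegree)⁻¹ := by rw [Finset.mul_sum]
        _ ≤ qn * ((n:ℝ)+1)^2 := by
            apply mul_le_mul_of_nonneg_left (sum_qd (n := n)) hqn.le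
    have hCS2 : (∑ s ∈ F2, φ s * err s)^2 ≤ T * (qn * ((n:ℝ)+1)^2) := by
      have habs2 : |∑ s ∈ F2, φ s * err s| ≤ ∑ s ∈ F2, |φ s| * |err s| := by
        calc |∑ s ∈ F2, φ s * err s| ≤ ∑ s ∈ F2, |φ s * err s| :=
              Finset.abs_sum_le_sum_abs _ _
          _ = ∑ s ∈ F2, |φ s| * |err s| := by
              apply Finset.sum_congr rfl; intro s _; rw [abs_mul]
      have hCS : (∑ s ∈ F2, |φ s| * |err s|)^2
          ≤ (∑ s ∈ F2, (φ s)^2 * x s) * (∑ s ∈ F2, (err s)^2 * (x s)⁻¹) := by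
        have key := sum_mul_sq_le_sq_mul_sq F2
          (fun s => |φ s| * Real.sqrt (x s)) (fun s => |err s| * Real.sqrt ((x s)⁻¹))
        have e1 : ∀ s ∈ F2, (|φ s| * Real.sqrt (x s)) * (|err s| * Real.sqrt ((x s)⁻¹))
            = |φ s| * |err s| := by
          intro s _
          have hxp := hxpos s
          rw [show (|φ s| * Real.sqrt (x s)) * (|err s| * Real.sqrt ((x s)⁻¹))
              = |φ s| * |err s| * (Real.sqrt (x s) * Real.sqrt ((x s)⁻¹)) by ring]
          rw [← Real.sqrt_mul hxp.le, mul_inv_cancel₀ hxp.ne', Real.sqrt_one, mul_one]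
        have e2 : ∀ s ∈ F2, (|φ s| * Real.sqrt (x s))^2 = (φ s)^2 * x s := by
          intro s _
          rw [mul_pow, sq_abs, Real.sq_sqrt (hxpos s).le]
        have e3 : ∀ s ∈ F2, (|err s| * Real.sqrt ((x s)⁻¹))^2 = (err s)^2 * (x s)⁻¹ := by
          intro s _
          rw [mul_pow, sq_abs, Real.sq_sqrt (by positivity)]
        rw [Finset.sum_congr rfl e1, Finset.sum_congr rfl e2, Finset.sum_congr rfl e3] at key
        exact key
      have hTF : ∑ s ∈ F2, (φ s)^2 * x s ≤ T := by
        rw [hT]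
        apply Finset.sum_le_sum_of_subset_of_nonneg
        · intro s hsm
          rw [hF2, Finset.mem_filter, hSB, Finset.mem_filter] at hsm
          exact hsm.1.1
        · intro s _ _
          have := (hxpos s).le; positivity
      have habs_nn : (0:ℝ) ≤ ∑ s ∈ F2, |φ s| * |err s| :=
        Finset.sum_nonneg fun s _ => by positivity
      have step1 : (∑ s ∈ F2, φ s * err s)^2 ≤ (∑ s ∈ F2, |φ s| * |err s|)^2 := by
        rw [← sq_abs]
        apply pow_le_pow_left₀ (abs_nonneg _) habs2
      have step2 : (∑ s ∈ F2, (φ s)^2 * x s) * (∑ s ∈ F2, (err s)^2 * (x s)⁻¹)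
          ≤ T * (qn * ((n:ℝ)+1)^2) := by
        apply mul_le_mul hTF hsum_err
          (Finset.sum_nonneg fun s hs => by
            have := (hxpos s).le
            positivity) hTnn
      linarith
    have hfinal : qn * (cb - c)^2 ≤ ((n:ℝ)+1)^2 * T := by
      rw [hdiff, hrestrict]
      rw [div_pow]
      rw [show qn * ((∑ s ∈ F2, φ s * err s)^2 / (qn)^2)
          = (∑ s ∈ F2, φ s * err s)^2 / qn by field_simp]
      rw [div_le_iff₀ hqn]
      calc (∑ s ∈ F2, φ s * err s)^2 ≤ T * (qn * ((n:ℝ)+1)^2) := hCS2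
        _ = ((n:ℝ)+1)^2 * T * qn := by ring
    calc qn * (cb - c)^2 ≤ ((n:ℝ)+1)^2 * T := hfinal
      _ ≤ (4 * qn) * T := mul_le_mul_of_nonneg_right (sq_np1_le_qn (n := n)) hTnn
      _ = 4 * (qn * T) := by ring
  -- combine
  have stepa : ∑ g ∈ Mfin Fq n, (Y g - c)^2
      ≤ 2 * ∑ g ∈ Mfin Fq n, (Y g - cb)^2 + 2 * (qn * (cb - c)^2) := by
    have pt : ∀ g ∈ Mfin Fq n, (Y g - c)^2 ≤ 2*(Y g - cb)^2 + 2*(cb - c)^2 := by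
      intro g _
      nlinarith [sq_nonneg ((Y g - cb) - (cb - c))]
    calc ∑ g ∈ Mfin Fq n, (Y g - c)^2
        ≤ ∑ g ∈ Mfin Fq n, (2*(Y g - cb)^2 + 2*(cb - c)^2) := Finset.sum_le_sum pt
      _ = 2 * ∑ g ∈ Mfin Fq n, (Y g - cb)^2 + 2 * (qn * (cb - c)^2) := by
          rw [Finset.sum_add_distrib, Finset.sum_const, nsmul_eq_mul, card_Mfin_real,
            ← Finset.mul_sum]
          ring
  have hrew : ∑ g ∈ Mfin Fq n, (∑ s ∈ SB, φ s * (Ee s g - lam s)) ^ 2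
      = ∑ g ∈ Mfin Fq n, (Y g - c)^2 := by
    apply Finset.sum_congr rfl
    intro g hg
    rw [hinner g hg]
  rw [hrew]
  calc ∑ g ∈ Mfin Fq n, (Y g - c)^2
      ≤ 2 * ∑ g ∈ Mfin Fq n, (Y g - cb)^2 + 2 * (qn * (cb - c)^2) := stepa
    _ ≤ 2 * ∑ g ∈ Mfin Fq n, (Y g)^2 + 2 * (qn * (cb - c)^2) := by
        have := stepb; linarith
    _ ≤ 2 * (3 * (qn * T)) + 2 * (4 * (qn * T)) := by
        have := stepc; have := stepd; nlinarith
    _ = 14 * (qn * T) := by ring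


theorem core_real (φ : Polynomial Fq × ℕ → ℝ) :
    ∑ g ∈ Mfin Fq n, (∑ s ∈ Sfin Fq n, φ s * (Ee s g - lam s)) ^ 2
      ≤ 34 * (qn * ∑ s ∈ Sfin Fq n, (φ s)^2 * (qr ^ (s.2 * s.1.natDegree))⁻¹) := by
  classical
  have hsplit : ∀ g, ∑ s ∈ Sfin Fq n, φ s * (Ee s g - lam s)
      = (∑ s ∈ (Sfin Fq n).filter (fun s => 4 * (s.2 * s.1.natDegree) ≤ n),
          φ s * (Ee s g - lam s))
        + ∑ s ∈ (Sfin Fq n).filter (fun s => ¬ 4 * (s.2 * s.1.natDegree) ≤ n),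
          φ s * (Ee s g - lam s) := by
    intro g
    rw [Finset.sum_filter_add_sum_filter_not]
  have pt : ∀ g ∈ Mfin Fq n, (∑ s ∈ Sfin Fq n, φ s * (Ee s g - lam s)) ^ 2
      ≤ 2 * (∑ s ∈ (Sfin Fq n).filter (fun s => 4 * (s.2 * s.1.natDegree) ≤ n),
          φ s * (Ee s g - lam s)) ^ 2
        + 2 * (∑ s ∈ (Sfin Fq n).filter (fun s => ¬ 4 * (s.2 * s.1.natDegree) ≤ n),
          φ s * (Ee s g - lam s)) ^ 2 := by
    intro g _
    rw [hsplit g]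
    set A := ∑ s ∈ (Sfin Fq n).filter (fun s => 4 * (s.2 * s.1.natDegree) ≤ n),
          φ s * (Ee s g - lam s)
    set B := ∑ s ∈ (Sfin Fq n).filter (fun s => ¬ 4 * (s.2 * s.1.natDegree) ≤ n),
          φ s * (Ee s g - lam s)
    nlinarith [sq_nonneg (A - B)]
  calc ∑ g ∈ Mfin Fq n, (∑ s ∈ Sfin Fq n, φ s * (Ee s g - lam s)) ^ 2
      ≤ ∑ g ∈ Mfin Fq n,
          (2 * (∑ s ∈ (Sfin Fq n).filter (fun s => 4 * (s.2 * s.1.natDegree) ≤ n),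
            φ s * (Ee s g - lam s)) ^ 2
          + 2 * (∑ s ∈ (Sfin Fq n).filter (fun s => ¬ 4 * (s.2 * s.1.natDegree) ≤ n),
            φ s * (Ee s g - lam s)) ^ 2) := Finset.sum_le_sum pt
    _ = 2 * ∑ g ∈ Mfin Fq n,
          (∑ s ∈ (Sfin Fq n).filter (fun s => 4 * (s.2 * s.1.natDegree) ≤ n),
            φ s * (Ee s g - lam s)) ^ 2
        + 2 * ∑ g ∈ Mfin Fq n,
          (∑ s ∈ (Sfin Fq n).filter (fun s => ¬ 4 * (s.2 * s.1.natDegree) ≤ n),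
            φ s * (Ee s g - lam s)) ^ 2 := by
        rw [Finset.sum_add_distrib, ← Finset.mul_sum, ← Finset.mul_sum]
    _ ≤ 2 * (3 * (qn * ∑ s ∈ Sfin Fq n, (φ s)^2 * (qr ^ (s.2 * s.1.natDegree))⁻¹))
        + 2 * (14 * (qn * ∑ s ∈ Sfin Fq n, (φ s)^2 * (qr ^ (s.2 * s.1.natDegree))⁻¹)) := by
        have h1 := partI (n := n) φ
        have h2 := partII (n := n) φ
        nlinarith
    _ = 34 * (qn * ∑ s ∈ Sfin Fq n, (φ s)^2 * (qr ^ (s.2 * s.1.natDegree))⁻¹) := by ring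

end Core


section Assemble

variable {n : ℕ}

local notation "qn" => ((Fintype.card Fq : ℝ) ^ n)
local notation "qr" => (Fintype.card Fq : ℝ)

lemma Mset_eq : {f : Polynomial Fq | f.Monic ∧ f.natDegree = n} = ↑(Mfin Fq n) := by
  ext f; simp [mem_Mfin]

lemma Sset_eq : {Pm : Polynomial Fq × ℕ |
      Pm.1.Monic ∧ Irreducible Pm.1 ∧ 1 ≤ Pm.2 ∧ Pm.2 * Pm.1.natDegree ≤ n}
    = ↑(Sfin Fq n) := by
  ext s; simp [mem_Sfin]

noncomputable def Dfin (n : ℕ) (g : Polynomial Fq) : Finset (Polynomial Fq) :=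
  (((Finset.range (n+1)).biUnion (fun d => Mfin Fq d))).filter
    (fun P => P.Monic ∧ Irreducible P ∧ P ∣ g)

lemma Dset_eq {g : Polynomial Fq} (hg : g ∈ Mfin Fq n) :
    {P : Polynomial Fq | P.Monic ∧ Irreducible P ∧ P ∣ g} = ↑(Dfin n g) := by
  obtain ⟨hgM, hgd⟩ := mem_Mfin.mp hg
  ext P
  simp only [Set.mem_setOf_eq, Finset.coe_filter, Dfin, Finset.mem_biUnion,
    Finset.mem_range, Set.mem_setOf_eq]
  constructor
  · rintro ⟨hM, hI, hdvd⟩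
    refine ⟨⟨P.natDegree, ?_, mem_Mfin.mpr ⟨hM, rfl⟩⟩, hM, hI, hdvd⟩
    have := Polynomial.natDegree_le_of_dvd hdvd hgM.ne_zero
    omega
  · rintro ⟨_, hrest⟩
    exact hrest

lemma inner_sum {g : Polynomial Fq} (hg : g ∈ Mfin Fq n) (ψ : Polynomial Fq → ℕ → ℂ) :
    ∑ P ∈ Dfin n g, ψ P (exactExp g P)
      = ∑ s ∈ Sfin Fq n, ψ s.1 s.2 * ((Ee s g : ℝ) : ℂ) := by
  classical
  obtain ⟨hgM, hgd⟩ := mem_Mfin.mp hg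
  have hgne : g ≠ 0 := hgM.ne_zero
  have hstep : ∀ s ∈ Sfin Fq n, ψ s.1 s.2 * ((Ee s g : ℝ) : ℂ)
      = if s.1 ^ s.2 ∣ g ∧ ¬ s.1 ^ (s.2+1) ∣ g then ψ s.1 s.2 else 0 := by
    intro s _
    rw [Ee_eq_ite]
    split_ifs
    · norm_num
    · norm_num
  rw [Finset.sum_congr rfl hstep, ← Finset.sum_filter]
  symm
  apply Finset.sum_nbij' (i := fun s => s.1) (j := fun P => (P, exactExp g P))
  · intro s hs
    rw [Finset.mem_filter] at hs
    obtain ⟨hsS, hdvd, hnot⟩ := hs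
    obtain ⟨hM, hI, hm, hr⟩ := mem_Sfin.mp hsS
    rw [Dfin, Finset.mem_filter]
    refine ⟨?_, hM, hI, ?_⟩
    · rw [Finset.mem_biUnion]
      refine ⟨s.1.natDegree, ?_, mem_Mfin.mpr ⟨hM, rfl⟩⟩
      rw [Finset.mem_range]
      have hd := hI.natDegree_pos
      have : s.1.natDegree ≤ s.2 * s.1.natDegree := Nat.le_mul_of_pos_left _ hm
      omega
    · exact dvd_trans (dvd_pow_self s.1 (by omega)) hdvd
  · intro P hP
    rw [Dfin, Finset.mem_filter] at hP
    obtain ⟨_, hM, hI, hdvd⟩ := hP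
    obtain ⟨h1, h2, h3⟩ := exactExp_spec hgne hM hI hdvd
    rw [Finset.mem_filter]
    refine ⟨mem_Sfin.mpr ⟨hM, hI, h1, ?_⟩, h2, h3⟩
    have hle2 := Polynomial.natDegree_le_of_dvd h2 hgne
    rw [natDegree_pow, hgd] at hle2
    exact hle2
  · intro s hs
    rw [Finset.mem_filter] at hs
    obtain ⟨hsS, hdvd, hnot⟩ := hs
    obtain ⟨hM, hI, hm, hr⟩ := mem_Sfin.mp hsS
    have : exactExp g s.1 = s.2 := exactExp_eq hM hI hdvd hnot
    exact Prod.ext rfl this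
  · intro P _
    rfl
  · intro s hs
    rw [Finset.mem_filter] at hs
    obtain ⟨hsS, hdvd, hnot⟩ := hs
    obtain ⟨hM, hI, hm, hr⟩ := mem_Sfin.mp hsS
    have : exactExp g s.1 = s.2 := exactExp_eq hM hI hdvd hnot
    rw [this]

lemma lamC_eq (s : Polynomial Fq × ℕ) :
    ((Fintype.card Fq : ℂ) ^ (s.2 * s.1.natDegree))⁻¹ *
        (1 - ((Fintype.card Fq : ℂ) ^ s.1.natDegree)⁻¹)
      = ((lam s : ℝ) : ℂ) := by
  rw [lam]
  push_cast
  ring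

lemma pointwise {g : Polynomial Fq} (hg : g ∈ Mfin Fq n) (ψ : Polynomial Fq → ℕ → ℂ) :
    ‖(∑ᶠ P ∈ {P : Polynomial Fq | P.Monic ∧ Irreducible P ∧ P ∣ g}, ψ P (exactExp g P))
        - ∑ s ∈ Sfin Fq n, ψ s.1 s.2 *
            (((Fintype.card Fq : ℂ) ^ (s.2 * s.1.natDegree))⁻¹ *
              (1 - ((Fintype.card Fq : ℂ) ^ s.1.natDegree)⁻¹))‖ ^ 2
      = (∑ s ∈ Sfin Fq n, (ψ s.1 s.2).re * (Ee s g - lam s)) ^ 2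
        + (∑ s ∈ Sfin Fq n, (ψ s.1 s.2).im * (Ee s g - lam s)) ^ 2 := by
  classical
  rw [Dset_eq hg, finsum_mem_coe_finset, inner_sum hg ψ]
  have hz : (∑ s ∈ Sfin Fq n, ψ s.1 s.2 * ((Ee s g : ℝ) : ℂ))
      - ∑ s ∈ Sfin Fq n, ψ s.1 s.2 *
          (((Fintype.card Fq : ℂ) ^ (s.2 * s.1.natDegree))⁻¹ *
            (1 - ((Fintype.card Fq : ℂ) ^ s.1.natDegree)⁻¹))
      = ∑ s ∈ Sfin Fq n, ψ s.1 s.2 * (((Ee s g - lam s : ℝ)) : ℂ) := by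
    rw [← Finset.sum_sub_distrib]
    apply Finset.sum_congr rfl
    intro s _
    rw [lamC_eq]
    push_cast
    ring
  rw [hz]
  set z := ∑ s ∈ Sfin Fq n, ψ s.1 s.2 * (((Ee s g - lam s : ℝ)) : ℂ) with hzz
  have hre : z.re = ∑ s ∈ Sfin Fq n, (ψ s.1 s.2).re * (Ee s g - lam s) := by
    rw [hzz, Complex.re_sum]
    apply Finset.sum_congr rfl
    intro s _
    simp [Complex.mul_re]
  have him : z.im = ∑ s ∈ Sfin Fq n, (ψ s.1 s.2).im * (Ee s g - lam s) := by
    rw [hzz, Complex.im_sum]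
    apply Finset.sum_congr rfl
    intro s _
    simp [Complex.mul_im]
  rw [← hre, ← him]
  rw [Complex.sq_norm, Complex.normSq_apply]
  ring

lemma sum_shift (hdeg : h.natDegree < n) (F : Polynomial Fq → ℝ) :
    ∑ f ∈ Mfin Fq n, F (f + h) = ∑ g ∈ Mfin Fq n, F g := by
  classical
  have hmem : ∀ f ∈ Mfin Fq n, f + h ∈ Mfin Fq n := by
    intro f hf
    obtain ⟨hM, hd⟩ := mem_Mfin.mp hf
    have hdlt : h.degree < f.degree := by
      calc h.degree ≤ (h.natDegree : WithBot ℕ) := Polynomial.degree_le_natDegree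
        _ < (n : WithBot ℕ) := by exact_mod_cast Nat.cast_lt.mpr hdeg
        _ = f.degree := by rw [Polynomial.degree_eq_natDegree hM.ne_zero, hd]
    rw [mem_Mfin]
    constructor
    · exact hM.add_of_left hdlt
    · rw [Polynomial.natDegree_add_eq_left_of_degree_lt hdlt, hd]
  have hmem' : ∀ g ∈ Mfin Fq n, g - h ∈ Mfin Fq n := by
    intro g hgm
    obtain ⟨hM, hd⟩ := mem_Mfin.mp hgm
    have hdlt : (-h).degree < g.degree := by
      rw [Polynomial.degree_neg]
      calc h.degree ≤ (h.natDegree : WithBot ℕ) := Polynomial.degree_le_natDegree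
        _ < (n : WithBot ℕ) := by exact_mod_cast Nat.cast_lt.mpr hdeg
        _ = g.degree := by rw [Polynomial.degree_eq_natDegree hM.ne_zero, hd]
    rw [mem_Mfin, sub_eq_add_neg]
    constructor
    · exact hM.add_of_left hdlt
    · rw [Polynomial.natDegree_add_eq_left_of_degree_lt hdlt, hd]
  apply Finset.sum_nbij' (i := fun f => f + h) (j := fun g => g - h)
  · exact hmem
  · exact hmem'
  · intro f _; rw [add_sub_cancel_right]
  · intro g _; rw [sub_add_cancel]
  · intro f _; rfl

end Assemble

end TK

open TK

/-- **Shifted Turán–Kubilius inequality over 𝔽_q[x], L² form.**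
For `h` of degree `< n` and arbitrary complex numbers `ψ(P^m)`,
`∑_{f ∈ M_{n,q}} |∑_{P^m ∥ f+h} ψ(P^m) - ∑_{m deg P ≤ n} ψ(P^m) q^{-m deg P}(1 - q^{-deg P})|²
  ≪ q^n ∑_{m deg P ≤ n} |ψ(P^m)|² q^{-m deg P}`. -/
theorem turan_kubilius_L2 (Fq : Type*) [Field Fq] [Fintype Fq] :
    ∃ C : ℝ, 0 < C ∧ ∀ (n : ℕ) (h : Polynomial Fq), h.natDegree < n →
      ∀ ψ : Polynomial Fq → ℕ → ℂ,
      (∑ᶠ f ∈ {f : Polynomial Fq | f.Monic ∧ f.natDegree = n},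
        ‖(∑ᶠ P ∈ {P : Polynomial Fq | P.Monic ∧ Irreducible P ∧ P ∣ (f + h)},
            ψ P (exactExp (f + h) P)) -
          ∑ᶠ Pm ∈ {Pm : Polynomial Fq × ℕ |
              Pm.1.Monic ∧ Irreducible Pm.1 ∧ 1 ≤ Pm.2 ∧ Pm.2 * Pm.1.natDegree ≤ n},
            ψ Pm.1 Pm.2 * (((Fintype.card Fq : ℂ) ^ (Pm.2 * Pm.1.natDegree))⁻¹ *
              (1 - ((Fintype.card Fq : ℂ) ^ Pm.1.natDegree)⁻¹))‖ ^ 2) ≤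
      C * (Fintype.card Fq : ℝ) ^ n *
        ∑ᶠ Pm ∈ {Pm : Polynomial Fq × ℕ |
            Pm.1.Monic ∧ Irreducible Pm.1 ∧ 1 ≤ Pm.2 ∧ Pm.2 * Pm.1.natDegree ≤ n},
          ‖ψ Pm.1 Pm.2‖ ^ 2 / (Fintype.card Fq : ℝ) ^ (Pm.2 * Pm.1.natDegree) := by
  classical
  refine ⟨34, by norm_num, ?_⟩
  intro n h hdeg ψ
  rw [Sset_eq (Fq := Fq) (n := n), finsum_mem_coe_finset, finsum_mem_coe_finset,
    Mset_eq (Fq := Fq) (n := n), finsum_mem_coe_finset]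
  have step1 : ∀ f ∈ Mfin Fq n,
      ‖(∑ᶠ P ∈ {P : Polynomial Fq | P.Monic ∧ Irreducible P ∧ P ∣ (f + h)},
          ψ P (exactExp (f + h) P)) -
        ∑ Pm ∈ Sfin Fq n,
          ψ Pm.1 Pm.2 * (((Fintype.card Fq : ℂ) ^ (Pm.2 * Pm.1.natDegree))⁻¹ *
            (1 - ((Fintype.card Fq : ℂ) ^ Pm.1.natDegree)⁻¹))‖ ^ 2
      = (∑ s ∈ Sfin Fq n, (ψ s.1 s.2).re * (Ee s (f + h) - lam s)) ^ 2
        + (∑ s ∈ Sfin Fq n, (ψ s.1 s.2).im * (Ee s (f + h) - lam s)) ^ 2 := by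
    intro f hf
    have hfh : f + h ∈ Mfin Fq n := by
      obtain ⟨hM, hd⟩ := mem_Mfin.mp hf
      have hdlt : h.degree < f.degree := by
        calc h.degree ≤ (h.natDegree : WithBot ℕ) := Polynomial.degree_le_natDegree
          _ < (n : WithBot ℕ) := by exact_mod_cast Nat.cast_lt.mpr hdeg
          _ = f.degree := by rw [Polynomial.degree_eq_natDegree hM.ne_zero, hd]
      rw [mem_Mfin]
      exact ⟨hM.add_of_left hdlt, by
        rw [Polynomial.natDegree_add_eq_left_of_degree_lt hdlt, hd]⟩
    exact pointwise hfh ψ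
  rw [Finset.sum_congr rfl step1]
  rw [sum_shift hdeg (fun g =>
    (∑ s ∈ Sfin Fq n, (ψ s.1 s.2).re * (Ee s g - lam s)) ^ 2
      + (∑ s ∈ Sfin Fq n, (ψ s.1 s.2).im * (Ee s g - lam s)) ^ 2)]
  rw [Finset.sum_add_distrib]
  have hre := core_real (Fq := Fq) (n := n) (fun s => (ψ s.1 s.2).re)
  have him := core_real (Fq := Fq) (n := n) (fun s => (ψ s.1 s.2).im)
  have hfin : (34:ℝ) * ((Fintype.card Fq : ℝ) ^ n
        * ∑ s ∈ Sfin Fq n, ((ψ s.1 s.2).re)^2 * ((Fintype.card Fq : ℝ) ^ (s.2 * s.1.natDegree))⁻¹)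
      + 34 * ((Fintype.card Fq : ℝ) ^ n
        * ∑ s ∈ Sfin Fq n, ((ψ s.1 s.2).im)^2 * ((Fintype.card Fq : ℝ) ^ (s.2 * s.1.natDegree))⁻¹)
      = 34 * (Fintype.card Fq : ℝ) ^ n *
        ∑ Pm ∈ Sfin Fq n, ‖ψ Pm.1 Pm.2‖ ^ 2 / (Fintype.card Fq : ℝ) ^ (Pm.2 * Pm.1.natDegree) := by
    set A := ∑ s ∈ Sfin Fq n, ((ψ s.1 s.2).re)^2
        * ((Fintype.card Fq : ℝ) ^ (s.2 * s.1.natDegree))⁻¹ with hA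
    set B := ∑ s ∈ Sfin Fq n, ((ψ s.1 s.2).im)^2
        * ((Fintype.card Fq : ℝ) ^ (s.2 * s.1.natDegree))⁻¹ with hB
    have hsum : A + B = ∑ Pm ∈ Sfin Fq n,
        ‖ψ Pm.1 Pm.2‖ ^ 2 / (Fintype.card Fq : ℝ) ^ (Pm.2 * Pm.1.natDegree) := by
      rw [hA, hB, ← Finset.sum_add_distrib]
      apply Finset.sum_congr rfl
      intro s _
      have hn : ‖ψ s.1 s.2‖ ^ 2 = ((ψ s.1 s.2).re)^2 + ((ψ s.1 s.2).im)^2 := by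
        rw [Complex.sq_norm, Complex.normSq_apply]
        ring
      rw [hn, div_eq_mul_inv]
      ring
    calc 34 * ((Fintype.card Fq : ℝ) ^ n * A) + 34 * ((Fintype.card Fq : ℝ) ^ n * B)
        = 34 * (Fintype.card Fq : ℝ) ^ n * (A + B) := by ring
      _ = _ := by rw [hsum]
  linarith
end

section
/- Fix a ∈ F_q^*. Then for every 0 < B < 1, (1/q^n)·∑_{f ∈ M_{n,q}} Φ(f)·Φ(f+a)/(|f|·|f+a|) = ∏_{P monic irreducible} (1 − 2/q^{2·deg P}) + O(n^{−B}) as n → ∞. -/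
open scoped Classical
open Polynomial Filter Asymptotics

/-- The Euler totient on `𝔽_q[x]` (as a real number), via the product formula
`Φ(f) = |f| ∏_{P ∣ f} (1 - 1/|P|)` over monic irreducible divisors `P` of `f`. -/
noncomputable def PhiR {Fq : Type*} [Field Fq] [Fintype Fq] (f : Polynomial Fq) : ℝ :=
  (Fintype.card Fq : ℝ) ^ f.natDegree *
    ∏ᶠ P ∈ {P : Polynomial Fq | P.Monic ∧ Irreducible P ∧ P ∣ f},
      (1 - ((Fintype.card Fq : ℝ) ^ P.natDegree)⁻¹)

open Finset in
section

namespace PhiCorrAux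

variable {Fq : Type*} [Field Fq] [Fintype Fq]

/-- auxiliary: the polynomial `X^n + ∑ c_i X^i`. -/
noncomputable def mkPoly (n : ℕ) (c : Fin n → Fq) : Polynomial Fq :=
  X ^ n + ∑ i : Fin n, C (c i) * X ^ (i : ℕ)

lemma degree_sum_lt (n : ℕ) (c : Fin n → Fq) :
    (∑ i : Fin n, C (c i) * X ^ (i : ℕ)).degree < (n : WithBot ℕ) := by
  refine lt_of_le_of_lt (degree_sum_le _ _) ?_
  rw [Finset.sup_lt_iff (by exact_mod_cast WithBot.bot_lt_coe n)]
  intro i _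
  exact lt_of_le_of_lt (degree_C_mul_X_pow_le _ _) (by exact_mod_cast i.2)

lemma mkPoly_monic (n : ℕ) (c : Fin n → Fq) : (mkPoly n c).Monic :=
  monic_X_pow_add (degree_sum_lt n c)

lemma mkPoly_degree (n : ℕ) (c : Fin n → Fq) : (mkPoly n c).degree = n := by
  rw [mkPoly, degree_add_eq_left_of_degree_lt, degree_X_pow]
  rw [degree_X_pow]; exact degree_sum_lt n c

lemma mkPoly_natDegree (n : ℕ) (c : Fin n → Fq) : (mkPoly n c).natDegree = n :=
  natDegree_eq_of_degree_eq_some (mkPoly_degree n c)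

lemma mkPoly_coeff_lt (n : ℕ) (c : Fin n → Fq) (i : Fin n) :
    (mkPoly n c).coeff (i : ℕ) = c i := by
  rw [mkPoly, coeff_add, coeff_X_pow, if_neg (by omega : (i:ℕ) ≠ n), finset_sum_coeff]
  rw [Finset.sum_eq_single i]
  · simp [coeff_C_mul, coeff_X_pow]
  · intro j _ hj
    have : (j : ℕ) ≠ (i : ℕ) := fun h => hj (Fin.ext h)
    simp [coeff_C_mul, coeff_X_pow, this, if_neg (Ne.symm this)]
  · simp

/-- The finset of monic polynomials of degree `n`. -/
noncomputable def Mset (n : ℕ) : Finset (Polynomial Fq) :=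
  (Finset.univ : Finset (Fin n → Fq)).image (mkPoly n)

lemma mkPoly_injective (n : ℕ) : Function.Injective (mkPoly (Fq := Fq) n) := by
  intro c c' h
  funext i
  rw [← mkPoly_coeff_lt n c i, ← mkPoly_coeff_lt n c' i, h]

lemma mem_Mset {n : ℕ} {f : Polynomial Fq} :
    f ∈ Mset n ↔ f.Monic ∧ f.natDegree = n := by
  constructor
  · rintro hf
    obtain ⟨c, _, rfl⟩ := Finset.mem_image.mp hf
    exact ⟨mkPoly_monic n c, mkPoly_natDegree n c⟩
  · rintro ⟨hf, rfl⟩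
    refine Finset.mem_image.mpr ⟨fun i => f.coeff i, Finset.mem_univ _, ?_⟩
    apply Polynomial.ext
    intro j
    rcases lt_trichotomy j f.natDegree with hj | hj | hj
    · exact (mkPoly_coeff_lt _ _ ⟨j, hj⟩)
    · subst hj
      rw [mkPoly, coeff_add, coeff_X_pow, if_pos rfl, finset_sum_coeff]
      have : ∀ i : Fin f.natDegree, (C (f.coeff i) * X ^ (i:ℕ)).coeff f.natDegree = 0 := by
        intro i
        rw [coeff_C_mul, coeff_X_pow, if_neg (by omega : f.natDegree ≠ (i:ℕ))]
        ring
      rw [Finset.sum_congr rfl (fun i _ => this i), Finset.sum_const, smul_zero, add_zero]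
      exact (hf.coeff_natDegree).symm
    · have h1 : (mkPoly f.natDegree fun i => f.coeff (i:ℕ)).natDegree < j := by
        rw [mkPoly_natDegree]; exact hj
      rw [coeff_eq_zero_of_natDegree_lt h1, coeff_eq_zero_of_natDegree_lt hj]
  
lemma card_Mset (n : ℕ) : (Mset (Fq := Fq) n).card = Fintype.card Fq ^ n := by
  rw [Mset, Finset.card_image_of_injective _ (mkPoly_injective n), Finset.card_univ]
  simp [Fintype.card_fun]

lemma Mset_monic {n : ℕ} {f : Polynomial Fq} (h : f ∈ Mset n) : f.Monic := (mem_Mset.mp h).1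
lemma Mset_natDegree {n : ℕ} {f : Polynomial Fq} (h : f ∈ Mset n) : f.natDegree = n :=
  (mem_Mset.mp h).2

/-- Counting monic polynomials of degree `n` in a residue class mod a monic `m`. -/
lemma count_residue (n : ℕ) (m r : Polynomial Fq) (hm : m.Monic) (hdeg : m.natDegree ≤ n) :
    ((Mset n).filter (fun f => m ∣ f - r)).card = Fintype.card Fq ^ (n - m.natDegree) := by
  classical
  rw [← card_Mset (Fq := Fq) (n - m.natDegree)]
  have hm0 : m ≠ 0 := hm.ne_zero
  have hmd : r %ₘ m + m * (r /ₘ m) = r := modByMonic_add_div r m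
  symm
  apply Finset.card_bij (fun g _ => m * g + r %ₘ m)
  · -- maps into the filter
    intro g hg
    obtain ⟨hgm, hgd⟩ := mem_Mset.mp hg
    have hmul : (m * g).Monic := hm.mul hgm
    have hmuld : (m * g).natDegree = n := by
      rw [natDegree_mul hm0 hgm.ne_zero, hgd]; omega
    have hlt : (r %ₘ m).degree < (m * g).degree := by
      refine lt_of_lt_of_le (degree_modByMonic_lt r hm) ?_
      exact degree_le_mul_left m hgm.ne_zero
    refine Finset.mem_filter.mpr ⟨mem_Mset.mpr ⟨hmul.add_of_left hlt, ?_⟩, ?_⟩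
    · rw [natDegree_eq_of_degree_eq (degree_add_eq_left_of_degree_lt hlt), hmuld]
    · have : m * g + r %ₘ m - r = m * g - m * (r /ₘ m) := by
        linear_combination hmd
      rw [this]
      exact dvd_sub (dvd_mul_right _ _) (dvd_mul_right _ _)
  · -- injective
    intro g1 h1 g2 h2 heq
    exact mul_left_cancel₀ hm0 (by simpa using heq)
  · -- surjective
    intro f hf
    obtain ⟨hfm, hdvd⟩ := Finset.mem_filter.mp hf
    obtain ⟨hfmon, hfdeg⟩ := mem_Mset.mp hfm
    have h1 : m ∣ f - r %ₘ m := by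
      have h2 : m ∣ r - r %ₘ m := by
        have : r - r %ₘ m = m * (r /ₘ m) := by linear_combination -hmd
        rw [this]; exact dvd_mul_right _ _
      have : f - r %ₘ m = (f - r) + (r - r %ₘ m) := by ring
      rw [this]; exact dvd_add hdvd h2
    obtain ⟨g, hg⟩ := h1
    have hlt : (-(r %ₘ m)).degree < f.degree := by
      rw [degree_neg]
      refine lt_of_lt_of_le (degree_modByMonic_lt r hm) ?_
      rw [degree_eq_natDegree hfmon.ne_zero, degree_eq_natDegree hm.ne_zero, hfdeg]
      exact_mod_cast hdeg
    have hsub : (f - r %ₘ m).Monic := by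
      rw [sub_eq_add_neg]; exact hfmon.add_of_left hlt
    have hsubdeg : (f - r %ₘ m).natDegree = n := by
      rw [sub_eq_add_neg, natDegree_eq_of_degree_eq (degree_add_eq_left_of_degree_lt hlt), hfdeg]
    have hg0 : g ≠ 0 := by
      rintro rfl
      rw [mul_zero] at hg
      exact hsub.ne_zero hg
    have hgm : g.Monic := hm.of_mul_monic_left (hg ▸ hsub)
    have hgd : g.natDegree = n - m.natDegree := by
      have := hsubdeg
      rw [hg, natDegree_mul hm0 hg0] at this
      omega
    refine ⟨g, mem_Mset.mpr ⟨hgm, hgd⟩, ?_⟩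
    linear_combination -hg

lemma count_le_one (n : ℕ) (m r : Polynomial Fq) (hdeg : n < m.natDegree) :
    ((Mset n).filter (fun f => m ∣ f - r)).card ≤ 1 := by
  classical
  apply Finset.card_le_one.mpr
  intro f1 h1 f2 h2
  obtain ⟨hm1, hd1⟩ := Finset.mem_filter.mp h1
  obtain ⟨hm2, hd2⟩ := Finset.mem_filter.mp h2
  by_contra hne
  have hdvd : m ∣ f1 - f2 := by
    have : f1 - f2 = (f1 - r) - (f2 - r) := by ring
    rw [this]; exact dvd_sub hd1 hd2
  have hne0 : f1 - f2 ≠ 0 := sub_ne_zero.mpr hne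
  have := natDegree_le_of_dvd hdvd hne0
  have hle : (f1 - f2).natDegree ≤ n := by
    refine le_trans (natDegree_sub_le f1 f2) ?_
    rw [Mset_natDegree hm1, Mset_natDegree hm2]; omega
  omega

end PhiCorrAux
namespace PhiCorrAux

variable {Fq : Type*} [Field Fq] [Fintype Fq]

/-- The type of monic irreducible polynomials (matching the theorem statement). -/
abbrev PP (Fq : Type*) [Field Fq] := {P : Polynomial Fq // P.Monic ∧ Irreducible P}

lemma PP.prime (P : PP Fq) : Prime P.1 :=
  (P.2.2).prime

lemma PP.natDegree_pos (P : PP Fq) : 0 < P.1.natDegree :=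
  natDegree_pos_iff_degree_pos.mpr (degree_pos_of_irreducible P.2.2)

lemma finite_polys_le (n : ℕ) :
    {p : Polynomial Fq | p.Monic ∧ p.natDegree ≤ n}.Finite := by
  apply Set.Finite.subset (Finset.finite_toSet ((Finset.range (n+1)).biUnion Mset))
  rintro p ⟨hm, hd⟩
  simp only [Finset.coe_biUnion, Finset.mem_coe, Finset.mem_range, Set.mem_iUnion]
  exact ⟨p.natDegree, by omega, mem_Mset.mpr ⟨hm, rfl⟩⟩

lemma finite_primes_le (n : ℕ) : {P : PP Fq | P.1.natDegree ≤ n}.Finite := by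
  have h := (finite_polys_le (Fq := Fq) n).preimage
    (f := (Subtype.val : PP Fq → Polynomial Fq)) (Set.injOn_of_injective Subtype.val_injective)
  apply Set.Finite.subset h
  intro P hP
  exact ⟨P.2.1, hP⟩

/-- The finset of monic irreducible polynomials of degree at most `n`. -/
noncomputable def Sfin (n : ℕ) : Finset (PP Fq) := (finite_primes_le n).toFinset

lemma mem_Sfin {n : ℕ} {P : PP Fq} : P ∈ Sfin n ↔ P.1.natDegree ≤ n :=
  Set.Finite.mem_toFinset _

/-- Product of a finset of primes. -/
noncomputable def pr (T : Finset (PP Fq)) : Polynomial Fq := ∏ P ∈ T, P.1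

lemma pr_monic (T : Finset (PP Fq)) : (pr T).Monic :=
  monic_prod_of_monic _ _ (fun P _ => P.2.1)

lemma pr_ne_zero (T : Finset (PP Fq)) : pr T ≠ 0 := (pr_monic T).ne_zero

lemma pr_natDegree (T : Finset (PP Fq)) :
    (pr T).natDegree = ∑ P ∈ T, P.1.natDegree :=
  natDegree_prod _ _ (fun P _ => P.2.1.ne_zero)

lemma coprime_of_ne {P Q : PP Fq} (h : P ≠ Q) : IsCoprime P.1 Q.1 := by
  rw [(P.2.2).coprime_iff_not_dvd]
  intro hdvd
  exact h (Subtype.ext (eq_of_monic_of_associated P.2.1 Q.2.1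
    ((P.2.2).associated_of_dvd Q.2.2 hdvd)))

lemma coprime_pr_of_disjoint {T U : Finset (PP Fq)} (h : Disjoint T U) :
    IsCoprime (pr T) (pr U) := by
  apply IsCoprime.prod_left
  intro P hP
  apply IsCoprime.prod_right
  intro Q hQ
  exact coprime_of_ne (fun hPQ => (Finset.disjoint_left.mp h) hP (hPQ ▸ hQ))

lemma pr_dvd_iff {T : Finset (PP Fq)} {f : Polynomial Fq} :
    pr T ∣ f ↔ ∀ P ∈ T, P.1 ∣ f := by
  constructor
  · intro h P hP
    exact dvd_trans (Finset.dvd_prod_of_mem _ hP) h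
  · classical
    induction T using Finset.induction_on with
    | empty => intro _; simp [pr]
    | @insert P T hPT ih =>
      intro h
      rw [pr, Finset.prod_insert hPT]
      have hcop : IsCoprime P.1 (pr T) := by
        apply IsCoprime.prod_right
        intro Q hQ
        exact coprime_of_ne (fun hPQ => hPT (hPQ ▸ hQ))
      exact hcop.mul_dvd (h P (Finset.mem_insert_self _ _))
        (ih (fun Q hQ => h Q (Finset.mem_insert_of_mem hQ)))

lemma mem_of_dvd_pr {P : PP Fq} {T : Finset (PP Fq)} (h : P.1 ∣ pr T) : P ∈ T := by
  obtain ⟨Q, hQ, hdvd⟩ := (Prime.dvd_finset_prod_iff (PP.prime P) _).mp h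
  have : P = Q := Subtype.ext (eq_of_monic_of_associated P.2.1 Q.2.1
    ((P.2.2).associated_of_dvd Q.2.2 hdvd))
  exact this ▸ hQ

lemma pr_injective : Function.Injective (pr (Fq := Fq)) := by
  intro T U h
  ext P
  constructor
  · intro hP
    exact mem_of_dvd_pr (h ▸ Finset.dvd_prod_of_mem _ hP)
  · intro hP
    exact mem_of_dvd_pr (h ▸ Finset.dvd_prod_of_mem (fun P : PP Fq => P.1) hP)

end PhiCorrAux
namespace PhiCorrAux

variable {Fq : Type*} [Field Fq] [Fintype Fq]

/-- the weight `q^{-deg P}` -/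
noncomputable def y (P : PP Fq) : ℝ := ((Fintype.card Fq : ℝ) ^ P.1.natDegree)⁻¹

/-- divisor finset of `f` among primes of degree at most `n` -/
noncomputable def Df (n : ℕ) (f : Polynomial Fq) : Finset (PP Fq) :=
  (Sfin n).filter (fun P => P.1 ∣ f)

lemma phiR_eq (n : ℕ) (f : Polynomial Fq) (hf : f.Monic) (hdf : f.natDegree ≤ n) :
    PhiR f = (Fintype.card Fq : ℝ) ^ f.natDegree * ∏ P ∈ Df n f, (1 - y P) := by
  unfold PhiR
  congr 1
  have hset : {P : Polynomial Fq | P.Monic ∧ Irreducible P ∧ P ∣ f}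
      = Subtype.val '' (↑(Df n f) : Set (PP Fq)) := by
    ext P
    simp only [Set.mem_setOf_eq, Set.mem_image, Finset.mem_coe, Df, Finset.mem_filter, mem_Sfin]
    constructor
    · rintro ⟨h1, h2, h3⟩
      exact ⟨⟨P, h1, h2⟩, ⟨natDegree_le_of_dvd h3 hf.ne_zero |>.trans hdf, h3⟩, rfl⟩
    · rintro ⟨Q, ⟨hQ1, hQ2⟩, rfl⟩
      exact ⟨Q.2.1, Q.2.2, hQ2⟩
  rw [hset, finprod_mem_image (Set.injOn_of_injective Subtype.val_injective),
    finprod_mem_coe_finset]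
  rfl

/-- expansion `∏ (v + 1) = ∑ over subsets` -/
lemma prod_one_add {v : PP Fq → ℝ} (s : Finset (PP Fq)) :
    ∏ P ∈ s, (v P + 1) = ∑ T ∈ s.powerset, ∏ P ∈ T, v P := by
  classical
  rw [Finset.prod_add]
  exact Finset.sum_congr rfl (fun T _ => by simp)

lemma prod_expand2 {w : PP Fq → ℝ} (s : Finset (PP Fq)) :
    ∏ P ∈ s, (w P + (w P + 1))
      = ∑ T ∈ s.powerset, ∑ U ∈ (s \ T).powerset, (∏ P ∈ T, w P) * ∏ P ∈ U, w P := by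
  classical
  rw [Finset.prod_add]
  refine Finset.sum_congr rfl (fun T _ => ?_)
  rw [prod_one_add, Finset.mul_sum]

lemma powerset_sdiff_eq_filter (s T : Finset (PP Fq)) :
    (s \ T).powerset = s.powerset.filter (fun U => Disjoint T U) := by
  classical
  ext U
  simp only [Finset.mem_powerset, Finset.mem_filter, Finset.subset_sdiff]
  rw [disjoint_comm]

/-- reindex double powerset sum as a sum over pairs -/
lemma sum_powerset_pairs (s : Finset (PP Fq)) (h : Finset (PP Fq) → Finset (PP Fq) → ℝ) :
    ∑ T ∈ s.powerset, ∑ U ∈ (s \ T).powerset, h T U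
      = ∑ p ∈ s.powerset ×ˢ s.powerset,
          if Disjoint p.1 p.2 then h p.1 p.2 else 0 := by
  classical
  rw [show (∑ p ∈ s.powerset ×ˢ s.powerset, if Disjoint p.1 p.2 then h p.1 p.2 else 0)
      = ∑ T ∈ s.powerset, ∑ U ∈ s.powerset, (if Disjoint T U then h T U else 0)
    from Finset.sum_product _ _ _]
  refine Finset.sum_congr rfl (fun T _ => ?_)
  rw [powerset_sdiff_eq_filter, Finset.sum_filter]

end PhiCorrAux
namespace PhiCorrAux

variable {Fq : Type*} [Field Fq] [Fintype Fq]

lemma qR_two_le : (2 : ℝ) ≤ (Fintype.card Fq : ℝ) := by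
  exact_mod_cast Fintype.one_lt_card

lemma qR_pos : (0 : ℝ) < (Fintype.card Fq : ℝ) :=
  lt_of_lt_of_le two_pos qR_two_le

lemma qR_ne_zero : (Fintype.card Fq : ℝ) ≠ 0 := ne_of_gt qR_pos

lemma y_pos (P : PP Fq) : 0 < y P := by
  unfold y
  positivity

/-- total degree of a finset of primes -/
def dT (T : Finset (PP Fq)) : ℕ := ∑ P ∈ T, P.1.natDegree

lemma pr_natDegree' (T : Finset (PP Fq)) : (pr T).natDegree = dT T := pr_natDegree T

lemma prod_y (T : Finset (PP Fq)) :
    ∏ P ∈ T, y P = ((Fintype.card Fq : ℝ) ^ dT T)⁻¹ := by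
  unfold y dT
  rw [Finset.prod_inv_distrib, Finset.prod_pow_eq_pow_sum]

/-- the pair index type -/
abbrev Pair (Fq : Type*) [Field Fq] := Finset (PP Fq) × Finset (PP Fq)

noncomputable def w2 (P : PP Fq) : ℝ := -(y P ^ 2)

noncomputable def g (p : Pair Fq) : ℝ :=
  if Disjoint p.1 p.2 then (∏ P ∈ p.1, w2 P) * ∏ P ∈ p.2, w2 P else 0

noncomputable def G (p : Pair Fq) : ℝ :=
  (((Fintype.card Fq : ℝ) ^ dT p.1)⁻¹) ^ 2 * (((Fintype.card Fq : ℝ) ^ dT p.2)⁻¹) ^ 2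

lemma G_nonneg (p : Pair Fq) : 0 ≤ G p := by unfold G; positivity

lemma abs_prod_w2 (T : Finset (PP Fq)) :
    |∏ P ∈ T, w2 P| = (((Fintype.card Fq : ℝ) ^ dT T)⁻¹) ^ 2 := by
  rw [Finset.abs_prod]
  have : ∀ P ∈ T, |w2 P| = y P ^ 2 := by
    intro P _
    rw [w2, abs_neg, abs_of_nonneg (by positivity)]
  rw [Finset.prod_congr rfl this, Finset.prod_pow, prod_y]

lemma abs_g_le (p : Pair Fq) : |g p| ≤ G p := by
  unfold g
  split_ifs with h
  · rw [abs_mul, abs_prod_w2, abs_prod_w2]; exact le_refl _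
  · rw [abs_zero]; exact G_nonneg p

/-- generic sum over monic polynomials grouped by degree -/
lemma sum_deg_le (s : Finset (Polynomial Fq)) (I : Finset ℕ) (φ : ℕ → ℝ)
    (hφ : ∀ k, 0 ≤ φ k) (h : ∀ d ∈ s, d.Monic ∧ d.natDegree ∈ I) :
    ∑ d ∈ s, φ d.natDegree ≤ ∑ k ∈ I, (Fintype.card Fq : ℝ) ^ k * φ k := by
  classical
  have hsub : s ⊆ I.biUnion Mset := by
    intro d hd
    exact Finset.mem_biUnion.mpr ⟨d.natDegree, (h d hd).2, mem_Mset.mpr ⟨(h d hd).1, rfl⟩⟩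
  have hdisj : (I : Set ℕ).PairwiseDisjoint (Mset (Fq := Fq)) := by
    intro k _ k' _ hkk'
    simp only [Function.onFun]
    rw [Finset.disjoint_left]
    intro d hd hd'
    exact hkk' ((Mset_natDegree hd).symm.trans (Mset_natDegree hd'))
  calc ∑ d ∈ s, φ d.natDegree
      ≤ ∑ d ∈ I.biUnion Mset, φ d.natDegree := by
        apply Finset.sum_le_sum_of_subset_of_nonneg hsub
        intro d _ _; exact hφ _
    _ = ∑ k ∈ I, ∑ d ∈ Mset k, φ d.natDegree := Finset.sum_biUnion hdisj
    _ = ∑ k ∈ I, (Fintype.card Fq : ℝ) ^ k * φ k := by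
        refine Finset.sum_congr rfl (fun k _ => ?_)
        rw [Finset.sum_congr rfl (fun d hd => by rw [Mset_natDegree hd] :
          ∀ d ∈ Mset (Fq := Fq) k, φ d.natDegree = φ k)]
        rw [Finset.sum_const, card_Mset, nsmul_eq_mul]
        push_cast
        ring

lemma geom_Icc_le (c M : ℕ) :
    ∑ k ∈ Finset.Icc c M, ((Fintype.card Fq : ℝ)⁻¹) ^ k
      ≤ 2 * ((Fintype.card Fq : ℝ)⁻¹) ^ c := by
  set x : ℝ := (Fintype.card Fq : ℝ)⁻¹ with hx
  have hx0 : 0 ≤ x := le_of_lt (inv_pos.mpr qR_pos)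
  have hx2 : x ≤ 1 / 2 := by
    rw [hx]
    rw [inv_le_comm₀ qR_pos (by norm_num)]
    · linarith [qR_two_le (Fq := Fq)]
  rw [← Finset.Ico_add_one_right_eq_Icc, Finset.sum_Ico_eq_sum_range]
  have : ∀ i ∈ Finset.range (M + 1 - c), x ^ (c + i) = x ^ c * x ^ i := by
    intro i _; rw [pow_add]
  rw [Finset.sum_congr rfl this, ← Finset.mul_sum]
  have hgeo : ∑ i ∈ Finset.range (M + 1 - c), x ^ i ≤ 2 := by
    calc ∑ i ∈ Finset.range (M + 1 - c), x ^ i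
        ≤ ∑ i ∈ Finset.range (M + 1 - c), (1/2 : ℝ) ^ i := by
          apply Finset.sum_le_sum
          intro i _
          exact pow_le_pow_left₀ hx0 hx2 i
      _ ≤ 2 := sum_geometric_two_le _
  calc x ^ c * ∑ i ∈ Finset.range (M + 1 - c), x ^ i ≤ x ^ c * 2 := by
        apply mul_le_mul_of_nonneg_left hgeo (by positivity)
    _ = 2 * x ^ c := by ring

/-- sum of `q^{-2 deg}` over monic polys of degree at least `c` -/
lemma A2 (s : Finset (Polynomial Fq)) (c : ℕ) (h : ∀ d ∈ s, d.Monic ∧ c ≤ d.natDegree) :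
    ∑ d ∈ s, (((Fintype.card Fq : ℝ) ^ d.natDegree)⁻¹) ^ 2
      ≤ 2 * ((Fintype.card Fq : ℝ)⁻¹) ^ c := by
  set M := s.sup Polynomial.natDegree with hM
  have h' : ∀ d ∈ s, d.Monic ∧ d.natDegree ∈ Finset.Icc c M := by
    intro d hd
    exact ⟨(h d hd).1, Finset.mem_Icc.mpr ⟨(h d hd).2, Finset.le_sup hd⟩⟩
  calc ∑ d ∈ s, (((Fintype.card Fq : ℝ) ^ d.natDegree)⁻¹) ^ 2
      ≤ ∑ k ∈ Finset.Icc c M, (Fintype.card Fq : ℝ) ^ k * (((Fintype.card Fq : ℝ) ^ k)⁻¹) ^ 2 :=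
        sum_deg_le s (Finset.Icc c M) (fun k => (((Fintype.card Fq : ℝ) ^ k)⁻¹) ^ 2)
          (fun k => by positivity) h'
    _ = ∑ k ∈ Finset.Icc c M, ((Fintype.card Fq : ℝ)⁻¹) ^ k := by
        refine Finset.sum_congr rfl (fun k _ => ?_)
        rw [sq, ← mul_assoc, mul_inv_cancel₀ (pow_ne_zero _ (qR_ne_zero (Fq := Fq))), one_mul,
          ← inv_pow]
    _ ≤ 2 * ((Fintype.card Fq : ℝ)⁻¹) ^ c := geom_Icc_le c M

/-- sum of `q^{-deg}` over monic polys of degree at most `nb` -/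
lemma A1 (s : Finset (Polynomial Fq)) (nb : ℕ) (h : ∀ d ∈ s, d.Monic ∧ d.natDegree ≤ nb) :
    ∑ d ∈ s, ((Fintype.card Fq : ℝ) ^ d.natDegree)⁻¹ ≤ nb + 1 := by
  calc ∑ d ∈ s, ((Fintype.card Fq : ℝ) ^ d.natDegree)⁻¹
      ≤ ∑ k ∈ Finset.range (nb + 1), (Fintype.card Fq : ℝ) ^ k * ((Fintype.card Fq : ℝ) ^ k)⁻¹ := by
        apply sum_deg_le s (Finset.range (nb + 1)) (fun k => ((Fintype.card Fq : ℝ) ^ k)⁻¹)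
          (fun k => by positivity)
        intro d hd
        exact ⟨(h d hd).1, Finset.mem_range.mpr (Nat.lt_succ_of_le (h d hd).2)⟩
    _ = ∑ k ∈ Finset.range (nb + 1), (1 : ℝ) := by
        refine Finset.sum_congr rfl (fun k _ => ?_)
        field_simp
    _ = nb + 1 := by simp

/-- map pairs of prime-finsets to pairs of polynomials -/
noncomputable def Ψ (p : Pair Fq) : Polynomial Fq × Polynomial Fq := (pr p.1, pr p.2)

lemma Ψ_injective : Function.Injective (Ψ (Fq := Fq)) := by
  intro p p' h
  obtain ⟨h1, h2⟩ := Prod.mk.injEq _ _ _ _ ▸ h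
  exact Prod.ext (pr_injective h1) (pr_injective h2)

/-- transfer a sum of products of degree-weights over pairs to a product of poly sums -/
lemma sum_pairs_le (u : Finset (Pair Fq)) (φ ψ : ℕ → ℝ)
    (hφ : ∀ k, 0 ≤ φ k) (hψ : ∀ k, 0 ≤ ψ k) :
    ∑ p ∈ u, φ (dT p.1) * ψ (dT p.2)
      ≤ (∑ d ∈ u.image (fun p => pr p.1), φ d.natDegree) *
        (∑ e ∈ u.image (fun p => pr p.2), ψ e.natDegree) := by
  classical
  have step1 : ∑ p ∈ u, φ (dT p.1) * ψ (dT p.2)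
      = ∑ x ∈ u.image Ψ, φ x.1.natDegree * ψ x.2.natDegree := by
    rw [Finset.sum_image (fun p _ p' _ h => Ψ_injective h)]
    refine Finset.sum_congr rfl (fun p _ => ?_)
    rw [Ψ]
    rw [pr_natDegree', pr_natDegree']
  have step2 : (∑ d ∈ u.image (fun p => pr p.1), φ d.natDegree) *
      (∑ e ∈ u.image (fun p => pr p.2), ψ e.natDegree)
      = ∑ x ∈ (u.image (fun p => pr p.1)) ×ˢ (u.image (fun p => pr p.2)),
          φ x.1.natDegree * ψ x.2.natDegree := by
    rw [Finset.sum_mul_sum, Finset.sum_product]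
  rw [step1, step2]
  apply Finset.sum_le_sum_of_subset_of_nonneg
  · intro x hx
    obtain ⟨p, hp, rfl⟩ := Finset.mem_image.mp hx
    rw [Finset.mem_product]
    exact ⟨Finset.mem_image.mpr ⟨p, hp, rfl⟩, Finset.mem_image.mpr ⟨p, hp, rfl⟩⟩
  · intro x _ _
    exact mul_nonneg (hφ _) (hψ _)

lemma image_pr_monic (u : Finset (Pair Fq)) :
    ∀ d ∈ u.image (fun p => pr p.1), d.Monic := by
  intro d hd
  obtain ⟨p, _, rfl⟩ := Finset.mem_image.mp hd
  exact pr_monic _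

lemma image_pr_monic' (u : Finset (Pair Fq)) :
    ∀ d ∈ u.image (fun p => pr p.2), d.Monic := by
  intro d hd
  obtain ⟨p, _, rfl⟩ := Finset.mem_image.mp hd
  exact pr_monic _

/-- bound on sums of `G` over pairs with lower bounds on degrees -/
lemma bound_G_pairs (u : Finset (Pair Fq)) (c1 c2 : ℕ)
    (h : ∀ p ∈ u, c1 ≤ dT p.1 ∧ c2 ≤ dT p.2) :
    ∑ p ∈ u, G p ≤ (2 * ((Fintype.card Fq : ℝ)⁻¹) ^ c1) * (2 * ((Fintype.card Fq : ℝ)⁻¹) ^ c2) := by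
  have := sum_pairs_le u (fun k => (((Fintype.card Fq : ℝ) ^ k)⁻¹) ^ 2)
    (fun k => (((Fintype.card Fq : ℝ) ^ k)⁻¹) ^ 2) (fun k => by positivity) (fun k => by positivity)
  refine le_trans (le_of_eq ?_) (le_trans this (mul_le_mul ?_ ?_ ?_ ?_))
  · rfl
  · apply A2
    intro d hd
    obtain ⟨p, hp, rfl⟩ := Finset.mem_image.mp hd
    exact ⟨pr_monic _, by rw [pr_natDegree']; exact (h p hp).1⟩
  · apply A2
    intro d hd
    obtain ⟨p, hp, rfl⟩ := Finset.mem_image.mp hd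
    exact ⟨pr_monic _, by rw [pr_natDegree']; exact (h p hp).2⟩
  · apply Finset.sum_nonneg; intro d _; positivity
  · positivity

/-- bound on sums of `q^{-dT-dU}` over pairs with upper bounds on degrees -/
lemma bound_A_pairs (u : Finset (Pair Fq)) (nb : ℕ)
    (h : ∀ p ∈ u, dT p.1 ≤ nb ∧ dT p.2 ≤ nb) :
    ∑ p ∈ u, ((Fintype.card Fq : ℝ) ^ dT p.1)⁻¹ * ((Fintype.card Fq : ℝ) ^ dT p.2)⁻¹
      ≤ (nb + 1) * (nb + 1) := by
  have := sum_pairs_le u (fun k => ((Fintype.card Fq : ℝ) ^ k)⁻¹)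
    (fun k => ((Fintype.card Fq : ℝ) ^ k)⁻¹) (fun k => by positivity) (fun k => by positivity)
  refine le_trans this (mul_le_mul ?_ ?_ ?_ ?_)
  · apply A1
    intro d hd
    obtain ⟨p, hp, rfl⟩ := Finset.mem_image.mp hd
    exact ⟨pr_monic _, by rw [pr_natDegree']; exact (h p hp).1⟩
  · apply A1
    intro d hd
    obtain ⟨p, hp, rfl⟩ := Finset.mem_image.mp hd
    exact ⟨pr_monic _, by rw [pr_natDegree']; exact (h p hp).2⟩
  · apply Finset.sum_nonneg; intro d _; positivity
  · positivity

/-- tail bound: sums of `G` over pairs with total degree `> n` -/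
lemma tail_G (n : ℕ) (u : Finset (Pair Fq)) (h : ∀ p ∈ u, n < dT p.1 + dT p.2) :
    ∑ p ∈ u, G p ≤ 8 * ((Fintype.card Fq : ℝ)⁻¹) ^ ((n + 2) / 2) := by
  classical
  set hn := (n + 2) / 2 with hhn
  set x : ℝ := (Fintype.card Fq : ℝ)⁻¹ with hx
  have hx0 : 0 ≤ x := le_of_lt (inv_pos.mpr qR_pos)
  rw [← Finset.sum_filter_add_sum_filter_not u (fun p => hn ≤ dT p.1)]
  have b1 : ∑ p ∈ u.filter (fun p => hn ≤ dT p.1), G p ≤ (2 * x ^ hn) * (2 * x ^ 0) := by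
    apply bound_G_pairs
    intro p hp
    exact ⟨(Finset.mem_filter.mp hp).2, Nat.zero_le _⟩
  have b2 : ∑ p ∈ u.filter (fun p => ¬ hn ≤ dT p.1), G p ≤ (2 * x ^ 0) * (2 * x ^ hn) := by
    apply bound_G_pairs
    intro p hp
    obtain ⟨hpu, hplt⟩ := Finset.mem_filter.mp hp
    refine ⟨Nat.zero_le _, ?_⟩
    have := h p hpu
    omega
  calc _ ≤ (2 * x ^ hn) * (2 * x ^ 0) + (2 * x ^ 0) * (2 * x ^ hn) := add_le_add b1 b2
    _ = 8 * x ^ hn := by simp; ring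

lemma summable_abs_g : Summable (fun p : Pair Fq => |g p|) := by
  apply summable_of_sum_le (fun p => abs_nonneg _)
  intro u
  calc ∑ p ∈ u, |g p| ≤ ∑ p ∈ u, G p := Finset.sum_le_sum (fun p _ => abs_g_le p)
    _ ≤ (2 * ((Fintype.card Fq : ℝ)⁻¹) ^ 0) * (2 * ((Fintype.card Fq : ℝ)⁻¹) ^ 0) :=
        bound_G_pairs u 0 0 (fun p _ => ⟨Nat.zero_le _, Nat.zero_le _⟩)
    _ ≤ 4 := by norm_num

lemma summable_g : Summable (g (Fq := Fq)) := summable_abs_g.of_abs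

end PhiCorrAux
namespace PhiCorrAux

variable {Fq : Type*} [Field Fq] [Fintype Fq]

/-- the Euler factor -/
noncomputable def F (P : PP Fq) : ℝ := 1 - 2 / (Fintype.card Fq : ℝ) ^ (2 * P.1.natDegree)

lemma F_eq (P : PP Fq) : F P = w2 P + (w2 P + 1) := by
  unfold F w2 y
  rw [pow_mul']
  rw [div_eq_mul_inv, ← inv_pow]
  ring

/-- the master finite Euler-product identity -/
lemma prod_F_eq (S : Finset (PP Fq)) :
    ∏ P ∈ S, F P = ∑ p ∈ S.powerset ×ˢ S.powerset, g p := by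
  classical
  rw [Finset.prod_congr rfl (fun P _ => F_eq P), prod_expand2, sum_powerset_pairs]
  rfl

lemma hasProd_F : HasProd (F (Fq := Fq)) (∑' p : Pair Fq, g p) := by
  have h1 : (fun S : Finset (PP Fq) => ∏ P ∈ S, F P)
      = (fun u : Finset (Pair Fq) => ∑ p ∈ u, g p) ∘
        (fun S : Finset (PP Fq) => S.powerset ×ˢ S.powerset) := by
    funext S
    exact prod_F_eq S
  rw [HasProd, h1]
  apply Filter.Tendsto.comp (summable_g.hasSum)
  apply Filter.tendsto_atTop_finset_of_monotone
  · intro S S' hS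
    exact Finset.product_subset_product (Finset.powerset_mono.mpr hS) (Finset.powerset_mono.mpr hS)
  · intro p
    refine ⟨p.1 ∪ p.2, Finset.mem_product.mpr ⟨?_, ?_⟩⟩
    · exact Finset.mem_powerset.mpr Finset.subset_union_left
    · exact Finset.mem_powerset.mpr Finset.subset_union_right

lemma tprod_F_eq : (∏' P : PP Fq, F P) = ∑' p : Pair Fq, g p :=
  hasProd_F.tprod_eq

lemma not_mem_Omega {n : ℕ} {p : Pair Fq}
    (h : p ∉ (Sfin (Fq := Fq) n).powerset ×ˢ (Sfin (Fq := Fq) n).powerset) :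
    n < dT p.1 + dT p.2 := by
  rw [Finset.mem_product, Finset.mem_powerset, Finset.mem_powerset] at h
  have key : ∀ T : Finset (PP Fq), ¬ T ⊆ Sfin n → n < dT T := by
    intro T hT
    obtain ⟨P, hPT, hPS⟩ := Finset.not_subset.mp hT
    have hdeg : n < P.1.natDegree := by
      by_contra hc
      exact hPS (mem_Sfin.mpr (by omega))
    calc n < P.1.natDegree := hdeg
      _ ≤ dT T := by
          unfold dT
          exact Finset.single_le_sum (f := fun Q : PP Fq => Q.1.natDegree)
            (fun Q _ => Nat.zero_le _) hPT
  by_cases h1 : p.1 ⊆ Sfin n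
  · have h2 : ¬ p.2 ⊆ Sfin n := fun h2 => h ⟨h1, h2⟩
    have := key p.2 h2
    omega
  · have := key p.1 h1
    omega

/-- quantitative tail for the infinite product -/
lemma C_tail (n : ℕ) :
    |(∑' p : Pair Fq, g p) - ∑ p ∈ (Sfin (Fq := Fq) n).powerset ×ˢ (Sfin (Fq := Fq) n).powerset, g p|
      ≤ 8 * ((Fintype.card Fq : ℝ)⁻¹) ^ ((n + 2) / 2) := by
  classical
  set Ω := (Sfin (Fq := Fq) n).powerset ×ˢ (Sfin (Fq := Fq) n).powerset with hΩ
  have hc := Summable.sum_add_tsum_compl (f := g (Fq := Fq)) (s := Ω) (summable_g (Fq := Fq))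
  have heq : (∑' p : Pair Fq, g p) - ∑ p ∈ Ω, g p
      = ∑' (x : ↑((↑Ω : Set (Pair Fq))ᶜ)), g x.val := by
    rw [← hc]; ring
  rw [heq]
  have hsub : Summable fun x : ↑((↑Ω : Set (Pair Fq))ᶜ) => |g x.val| :=
    (summable_abs_g).subtype _
  have habs : |∑' (x : ↑((↑Ω : Set (Pair Fq))ᶜ)), g x.val|
      ≤ ∑' (x : ↑((↑Ω : Set (Pair Fq))ᶜ)), |g x.val| := by
    have := norm_tsum_le_tsum_norm (f := fun x : ↑((↑Ω : Set (Pair Fq))ᶜ) => g x.val) ?_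
    · simpa [Real.norm_eq_abs] using this
    · simpa [Real.norm_eq_abs] using hsub
  refine le_trans habs ?_
  apply Summable.tsum_le_of_sum_le hsub
  intro u
  have : ∑ x ∈ u, |g x.val| = ∑ p ∈ u.image Subtype.val, |g p| := by
    rw [Finset.sum_image (fun a _ b _ h => Subtype.ext h)]
  rw [this]
  calc ∑ p ∈ u.image Subtype.val, |g p|
      ≤ ∑ p ∈ u.image Subtype.val, G p :=
        Finset.sum_le_sum (fun p _ => abs_g_le p)
    _ ≤ 8 * ((Fintype.card Fq : ℝ)⁻¹) ^ ((n + 2) / 2) := by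
        apply tail_G
        intro p hp
        obtain ⟨x, _, rfl⟩ := Finset.mem_image.mp hp
        exact not_mem_Omega (Set.mem_compl_iff _ _ |>.mp x.2)

end PhiCorrAux
namespace PhiCorrAux

variable {Fq : Type*} [Field Fq] [Fintype Fq]

lemma set_eq_Mset (n : ℕ) :
    {f : Polynomial Fq | f.Monic ∧ f.natDegree = n} = ↑(Mset (Fq := Fq) n) := by
  ext f
  simp only [Set.mem_setOf_eq, Finset.mem_coe, mem_Mset]

/-- signed weight of a finset of primes -/
noncomputable def xone (T : Finset (PP Fq)) : ℝ := ∏ P ∈ T, (-(y P))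

lemma abs_xone (T : Finset (PP Fq)) :
    |xone T| = ((Fintype.card Fq : ℝ) ^ dT T)⁻¹ := by
  rw [xone, Finset.abs_prod]
  have : ∀ P ∈ T, |(-(y P))| = y P := by
    intro P _
    rw [abs_neg, abs_of_nonneg (le_of_lt (y_pos P))]
  rw [Finset.prod_congr rfl this, prod_y]

lemma g_eq_xone (p : Pair Fq) (hd : Disjoint p.1 p.2) :
    g p = xone p.1 * xone p.2 *
      (((Fintype.card Fq : ℝ) ^ dT p.1)⁻¹ * ((Fintype.card Fq : ℝ) ^ dT p.2)⁻¹) := by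
  rw [g, if_pos hd]
  have key : ∀ T : Finset (PP Fq),
      ∏ P ∈ T, w2 P = xone T * ((Fintype.card Fq : ℝ) ^ dT T)⁻¹ := by
    intro T
    rw [xone, ← prod_y, ← Finset.prod_mul_distrib]
    refine Finset.prod_congr rfl (fun P _ => ?_)
    rw [w2]; ring
  rw [key, key]; ring

lemma ite_mul_ite (c₁ c₂ : Prop) [Decidable c₁] [Decidable c₂] (x y : ℝ) :
    (if c₁ then x else 0) * (if c₂ then y else 0) = if c₁ ∧ c₂ then x * y else 0 := by
  by_cases h1 : c₁ <;> by_cases h2 : c₂ <;> simp [h1, h2]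

lemma powerset_Df (n : ℕ) (f : Polynomial Fq) :
    (Df n f).powerset = (Sfin (Fq := Fq) n).powerset.filter (fun T => pr T ∣ f) := by
  classical
  ext T
  simp only [Finset.mem_powerset, Finset.mem_filter]
  constructor
  · intro h
    have h1 : T ⊆ Sfin n := fun P hP => (Finset.mem_filter.mp (h hP)).1
    have h2 : ∀ P ∈ T, P.1 ∣ f := fun P hP => (Finset.mem_filter.mp (h hP)).2
    exact ⟨h1, pr_dvd_iff.mpr h2⟩
  · rintro ⟨h1, h2⟩
    intro P hP
    exact Finset.mem_filter.mpr ⟨h1 hP, pr_dvd_iff.mp h2 P hP⟩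

section WithA
variable (a : Fq)

/-- the number of monic `f` of degree `n` with `pr T ∣ f` and `pr U ∣ f + C a` -/
noncomputable def Nc (n : ℕ) (p : Pair Fq) : ℕ :=
  (((Mset n).filter (fun f => pr p.1 ∣ f ∧ pr p.2 ∣ (f + Polynomial.C a))).card)

lemma f_expand {n : ℕ} (hn : 1 ≤ n) {f : Polynomial Fq} (hf : f ∈ Mset n) :
    PhiR f * PhiR (f + Polynomial.C a) /
        ((Fintype.card Fq : ℝ) ^ f.natDegree *
          (Fintype.card Fq : ℝ) ^ (f + Polynomial.C a).natDegree)
      = ∑ p ∈ (Sfin (Fq := Fq) n).powerset ×ˢ (Sfin (Fq := Fq) n).powerset,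
          if pr p.1 ∣ f ∧ pr p.2 ∣ (f + Polynomial.C a) then xone p.1 * xone p.2 else 0 := by
  classical
  obtain ⟨hfm, hfd⟩ := mem_Mset.mp hf
  have hCdeg : (Polynomial.C a).degree < f.degree := by
    refine lt_of_le_of_lt Polynomial.degree_C_le ?_
    rw [degree_eq_natDegree hfm.ne_zero, hfd]
    exact_mod_cast hn
  have hf'm : (f + Polynomial.C a).Monic := hfm.add_of_left hCdeg
  have hf'd : (f + Polynomial.C a).natDegree = n := by
    rw [natDegree_add_C, hfd]
  have e1 := phiR_eq n f hfm (le_of_eq hfd)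
  have e2 := phiR_eq n (f + Polynomial.C a) hf'm (le_of_eq hf'd)
  rw [e1, e2, hfd, hf'd]
  have hq : ((Fintype.card Fq : ℝ) ^ n) ≠ 0 := pow_ne_zero _ qR_ne_zero
  rw [show ∀ A B : ℝ, ((Fintype.card Fq : ℝ) ^ n * A) * ((Fintype.card Fq : ℝ) ^ n * B) /
      ((Fintype.card Fq : ℝ) ^ n * (Fintype.card Fq : ℝ) ^ n) = A * B from
    fun A B => by field_simp]
  have expand : ∀ gpoly : Polynomial Fq,
      ∏ P ∈ Df n gpoly, (1 - y P)
        = ∑ T ∈ (Sfin (Fq := Fq) n).powerset, if pr T ∣ gpoly then xone T else 0 := by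
    intro gpoly
    have : ∀ P ∈ Df n gpoly, (1 - y P) = (-(y P)) + 1 := fun P _ => by ring
    rw [Finset.prod_congr rfl this, prod_one_add, powerset_Df, Finset.sum_filter]
    rfl
  rw [expand f, expand (f + Polynomial.C a)]
  rw [Finset.sum_mul_sum, ← Finset.sum_product']
  refine Finset.sum_congr rfl (fun p _ => ?_)
  exact ite_mul_ite _ _ _ _

lemma lhs_swap {n : ℕ} (hn : 1 ≤ n) :
    (∑ᶠ f ∈ {f : Polynomial Fq | f.Monic ∧ f.natDegree = n},
        PhiR f * PhiR (f + Polynomial.C a) /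
          ((Fintype.card Fq : ℝ) ^ f.natDegree *
            (Fintype.card Fq : ℝ) ^ (f + Polynomial.C a).natDegree)) /
        (Fintype.card Fq : ℝ) ^ n
      = ∑ p ∈ (Sfin (Fq := Fq) n).powerset ×ˢ (Sfin (Fq := Fq) n).powerset,
          xone p.1 * xone p.2 * (Nc a n p : ℝ) / (Fintype.card Fq : ℝ) ^ n := by
  classical
  rw [set_eq_Mset, finsum_mem_coe_finset]
  rw [Finset.sum_congr rfl (fun f hf => f_expand a hn hf)]
  rw [Finset.sum_comm]
  rw [Finset.sum_div]
  refine Finset.sum_congr rfl (fun p _ => ?_)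
  rw [← Finset.sum_filter, Finset.sum_const, nsmul_eq_mul, Nc]
  ring

lemma Nc_zero_of_not_disjoint (ha : a ≠ 0) (n : ℕ) (p : Pair Fq) (hd : ¬ Disjoint p.1 p.2) :
    Nc a n p = 0 := by
  classical
  rw [Nc, Finset.card_eq_zero, Finset.filter_eq_empty_iff]
  intro f _
  rintro ⟨h1, h2⟩
  obtain ⟨P, hP1, hP2⟩ := Finset.not_disjoint_iff.mp hd
  have hPf : P.1 ∣ f := pr_dvd_iff.mp h1 P hP1
  have hPf' : P.1 ∣ f + Polynomial.C a := pr_dvd_iff.mp h2 P hP2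
  have hPa : P.1 ∣ Polynomial.C a := by
    have : Polynomial.C a = (f + Polynomial.C a) - f := by ring
    rw [this]
    exact dvd_sub hPf' hPf
  have hCa0 : Polynomial.C a ≠ 0 := fun h => ha (by
    have := Polynomial.C_injective (R := Fq); exact this (h.trans Polynomial.C_0.symm))
  have := natDegree_le_of_dvd hPa hCa0
  rw [Polynomial.natDegree_C] at this
  exact absurd this (by have := PP.natDegree_pos P; omega)

/-- the CRT residue: the divisibility conditions are a residue condition mod `pr T * pr U` -/
lemma crt_iff {p : Pair Fq} (hd : Disjoint p.1 p.2) :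
    ∃ r : Polynomial Fq, ∀ f : Polynomial Fq,
      ((pr p.1 ∣ f ∧ pr p.2 ∣ (f + Polynomial.C a)) ↔ pr p.1 * pr p.2 ∣ f - r) := by
  obtain ⟨u, v, huv⟩ := coprime_pr_of_disjoint hd
  refine ⟨-(Polynomial.C a) * u * pr p.1, fun f => ?_⟩
  have hr1 : pr p.1 ∣ -(Polynomial.C a) * u * pr p.1 := Dvd.intro_left _ rfl
  have hr2 : pr p.2 ∣ (-(Polynomial.C a) * u * pr p.1) + Polynomial.C a := by
    have : (-(Polynomial.C a) * u * pr p.1) + Polynomial.C a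
        = Polynomial.C a * (v * pr p.2) := by
      linear_combination (-(Polynomial.C a)) * huv
    rw [this]
    exact ⟨Polynomial.C a * v, by ring⟩
  constructor
  · rintro ⟨h1, h2⟩
    apply (coprime_pr_of_disjoint hd).mul_dvd
    · exact dvd_sub h1 hr1
    · have : f - (-(Polynomial.C a) * u * pr p.1)
          = (f + Polynomial.C a) - ((-(Polynomial.C a) * u * pr p.1) + Polynomial.C a) := by
        ring
      rw [this]
      exact dvd_sub h2 hr2
  · intro h
    have hd1 : pr p.1 ∣ f - (-(Polynomial.C a) * u * pr p.1) :=
      dvd_trans (dvd_mul_right _ _) h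
    have hd2 : pr p.2 ∣ f - (-(Polynomial.C a) * u * pr p.1) :=
      dvd_trans (dvd_mul_left _ _) h
    constructor
    · have : f = (f - (-(Polynomial.C a) * u * pr p.1)) + (-(Polynomial.C a) * u * pr p.1) := by
        ring
      rw [this]
      exact dvd_add hd1 hr1
    · have : f + Polynomial.C a = (f - (-(Polynomial.C a) * u * pr p.1))
          + ((-(Polynomial.C a) * u * pr p.1) + Polynomial.C a) := by ring
      rw [this]
      exact dvd_add hd2 hr2

lemma Nc_eq {n : ℕ} {p : Pair Fq} (hd : Disjoint p.1 p.2) (hdeg : dT p.1 + dT p.2 ≤ n) :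
    Nc a n p = Fintype.card Fq ^ (n - (dT p.1 + dT p.2)) := by
  classical
  obtain ⟨r, hr⟩ := crt_iff a hd
  have hm : (pr p.1 * pr p.2).Monic := (pr_monic _).mul (pr_monic _)
  have hmd : (pr p.1 * pr p.2).natDegree = dT p.1 + dT p.2 := by
    rw [natDegree_mul (pr_ne_zero _) (pr_ne_zero _), pr_natDegree', pr_natDegree']
  have : Nc a n p = ((Mset n).filter (fun f => pr p.1 * pr p.2 ∣ f - r)).card := by
    rw [Nc]
    congr 1
    apply Finset.filter_congr
    intro f _
    exact hr f
  rw [this, count_residue n _ r hm (by omega), hmd]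

lemma Nc_le_one {n : ℕ} {p : Pair Fq} (hd : Disjoint p.1 p.2) (hdeg : n < dT p.1 + dT p.2) :
    Nc a n p ≤ 1 := by
  classical
  obtain ⟨r, hr⟩ := crt_iff a hd
  have hmd : (pr p.1 * pr p.2).natDegree = dT p.1 + dT p.2 := by
    rw [natDegree_mul (pr_ne_zero _) (pr_ne_zero _), pr_natDegree', pr_natDegree']
  have : Nc a n p = ((Mset n).filter (fun f => pr p.1 * pr p.2 ∣ f - r)).card := by
    rw [Nc]
    congr 1
    apply Finset.filter_congr
    intro f _
    exact hr f
  rw [this]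
  exact count_le_one n _ r (by omega)

lemma Nc_deg_le {n : ℕ} (hn : 1 ≤ n) {p : Pair Fq} (h : Nc a n p ≠ 0) :
    dT p.1 ≤ n ∧ dT p.2 ≤ n := by
  classical
  have hne : ((Mset n).filter
      (fun f => pr p.1 ∣ f ∧ pr p.2 ∣ (f + Polynomial.C a))).Nonempty := by
    rw [← Finset.card_pos]
    exact Nat.pos_of_ne_zero h
  obtain ⟨f, hf⟩ := hne
  obtain ⟨hfM, h1, h2⟩ : f ∈ Mset n ∧ pr p.1 ∣ f ∧ pr p.2 ∣ (f + Polynomial.C a) := by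
    have := Finset.mem_filter.mp hf
    exact ⟨this.1, this.2.1, this.2.2⟩
  obtain ⟨hfm, hfd⟩ := mem_Mset.mp hfM
  have hCdeg : (Polynomial.C a).degree < f.degree := by
    refine lt_of_le_of_lt Polynomial.degree_C_le ?_
    rw [degree_eq_natDegree hfm.ne_zero, hfd]
    exact_mod_cast hn
  have hf'm : (f + Polynomial.C a).Monic := hfm.add_of_left hCdeg
  constructor
  · rw [← pr_natDegree']
    exact (natDegree_le_of_dvd h1 hfm.ne_zero).trans (le_of_eq hfd)
  · rw [← pr_natDegree']
    have := natDegree_le_of_dvd h2 hf'm.ne_zero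
    rwa [natDegree_add_C, hfd] at this

end WithA

end PhiCorrAux
namespace PhiCorrAux

variable {Fq : Type*} [Field Fq] [Fintype Fq]

section WithA2
variable (a : Fq)

lemma c1_eq_g (ha : a ≠ 0) {n : ℕ} {p : Pair Fq} (hdeg : dT p.1 + dT p.2 ≤ n) :
    xone p.1 * xone p.2 * (Nc a n p : ℝ) / (Fintype.card Fq : ℝ) ^ n = g p := by
  by_cases hd : Disjoint p.1 p.2
  · rw [Nc_eq a hd hdeg, g_eq_xone p hd]
    push_cast
    have hqn : (Fintype.card Fq : ℝ) ^ n
        = (Fintype.card Fq : ℝ) ^ (n - (dT p.1 + dT p.2)) *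
          ((Fintype.card Fq : ℝ) ^ dT p.1 * (Fintype.card Fq : ℝ) ^ dT p.2) := by
      rw [← pow_add, ← pow_add]
      congr 1
      omega
    rw [hqn]
    have h1 : (Fintype.card Fq : ℝ) ^ (n - (dT p.1 + dT p.2)) ≠ 0 := pow_ne_zero _ qR_ne_zero
    have h2 : (Fintype.card Fq : ℝ) ^ dT p.1 ≠ 0 := pow_ne_zero _ qR_ne_zero
    have h3 : (Fintype.card Fq : ℝ) ^ dT p.2 ≠ 0 := pow_ne_zero _ qR_ne_zero
    field_simp
  · rw [Nc_zero_of_not_disjoint a ha n p hd, g, if_neg hd]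
    simp

lemma abs_c1_le (ha : a ≠ 0) {n : ℕ} (hn : 1 ≤ n) {p : Pair Fq}
    (hdeg : n < dT p.1 + dT p.2) :
    |xone p.1 * xone p.2 * (Nc a n p : ℝ) / (Fintype.card Fq : ℝ) ^ n|
      ≤ ((Fintype.card Fq : ℝ) ^ dT p.1)⁻¹ * ((Fintype.card Fq : ℝ) ^ dT p.2)⁻¹ *
        ((Fintype.card Fq : ℝ) ^ n)⁻¹ := by
  by_cases hd : Disjoint p.1 p.2
  · have hNc : (Nc a n p : ℝ) ≤ 1 := by
      exact_mod_cast Nc_le_one a hd hdeg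
    rw [abs_div, abs_mul, abs_mul, abs_xone, abs_xone, Nat.abs_cast,
      abs_of_pos (pow_pos (qR_pos (Fq := Fq)) n), div_eq_mul_inv]
    have hNc0 : (0:ℝ) ≤ (Nc a n p : ℝ) := Nat.cast_nonneg _
    have base : (0:ℝ) ≤ ((Fintype.card Fq : ℝ) ^ dT p.1)⁻¹ * ((Fintype.card Fq : ℝ) ^ dT p.2)⁻¹ := by
      positivity
    calc ((Fintype.card Fq : ℝ) ^ dT p.1)⁻¹ * ((Fintype.card Fq : ℝ) ^ dT p.2)⁻¹ *
          (Nc a n p : ℝ) * ((Fintype.card Fq : ℝ) ^ n)⁻¹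
        ≤ ((Fintype.card Fq : ℝ) ^ dT p.1)⁻¹ * ((Fintype.card Fq : ℝ) ^ dT p.2)⁻¹ *
          1 * ((Fintype.card Fq : ℝ) ^ n)⁻¹ := by
          apply mul_le_mul_of_nonneg_right _ (by positivity)
          exact mul_le_mul_of_nonneg_left hNc base
      _ = ((Fintype.card Fq : ℝ) ^ dT p.1)⁻¹ * ((Fintype.card Fq : ℝ) ^ dT p.2)⁻¹ *
          ((Fintype.card Fq : ℝ) ^ n)⁻¹ := by ring
  · rw [Nc_zero_of_not_disjoint a ha n p hd]
    simp
    positivity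

lemma main_bound (ha : a ≠ 0) {n : ℕ} (hn : 1 ≤ n) :
    |(∑ᶠ f ∈ {f : Polynomial Fq | f.Monic ∧ f.natDegree = n},
          PhiR f * PhiR (f + Polynomial.C a) /
            ((Fintype.card Fq : ℝ) ^ f.natDegree *
              (Fintype.card Fq : ℝ) ^ (f + Polynomial.C a).natDegree)) /
        (Fintype.card Fq : ℝ) ^ n
      - ∑' p : Pair Fq, g p|
    ≤ ((n : ℝ) + 1) * ((n : ℝ) + 1) * ((Fintype.card Fq : ℝ) ^ n)⁻¹
      + 16 * ((Fintype.card Fq : ℝ)⁻¹) ^ ((n + 2) / 2) := by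
  classical
  rw [lhs_swap a hn]
  set Ω := (Sfin (Fq := Fq) n).powerset ×ˢ (Sfin (Fq := Fq) n).powerset with hΩ
  set c1 : Pair Fq → ℝ :=
    fun p => xone p.1 * xone p.2 * (Nc a n p : ℝ) / (Fintype.card Fq : ℝ) ^ n with hc1
  have tri : |∑ p ∈ Ω, c1 p - ∑' p : Pair Fq, g p|
      ≤ |∑ p ∈ Ω, c1 p - ∑ p ∈ Ω, g p| + |(∑' p : Pair Fq, g p) - ∑ p ∈ Ω, g p| := by
    have := abs_sub_le (∑ p ∈ Ω, c1 p) (∑ p ∈ Ω, g p) (∑' p : Pair Fq, g p)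
    rwa [abs_sub_comm (∑ p ∈ Ω, g p) (∑' p : Pair Fq, g p)] at this
  have hctail := C_tail (Fq := Fq) n
  rw [← hΩ] at hctail
  have hmain : |∑ p ∈ Ω, c1 p - ∑ p ∈ Ω, g p|
      ≤ ((n : ℝ) + 1) * ((n : ℝ) + 1) * ((Fintype.card Fq : ℝ) ^ n)⁻¹
        + 8 * ((Fintype.card Fq : ℝ)⁻¹) ^ ((n + 2) / 2) := by
    rw [← Finset.sum_sub_distrib]
    set D := Ω.filter (fun p => n < dT p.1 + dT p.2) with hD
    have hsplit : ∑ p ∈ Ω, (c1 p - g p) = ∑ p ∈ D, (c1 p - g p) := by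
      rw [← Finset.sum_filter_add_sum_filter_not Ω (fun p => n < dT p.1 + dT p.2)]
      have : ∑ p ∈ Ω.filter (fun p => ¬ n < dT p.1 + dT p.2), (c1 p - g p) = 0 := by
        apply Finset.sum_eq_zero
        intro p hp
        have hle : dT p.1 + dT p.2 ≤ n := by
          have := (Finset.mem_filter.mp hp).2
          omega
        show (fun p : Pair Fq => xone p.1 * xone p.2 * (Nc a n p : ℝ) /
          (Fintype.card Fq : ℝ) ^ n) p - g p = 0
        simp only []
        rw [c1_eq_g a ha hle]
        ring
      rw [this, add_zero]
    rw [hsplit]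
    refine le_trans (Finset.abs_sum_le_sum_abs _ _) ?_
    have habs : ∀ p ∈ D, |c1 p - g p| ≤ |c1 p| + |g p| := fun p _ => abs_sub _ _
    refine le_trans (Finset.sum_le_sum habs) ?_
    rw [Finset.sum_add_distrib]
    have hgD : ∑ p ∈ D, |g p| ≤ 8 * ((Fintype.card Fq : ℝ)⁻¹) ^ ((n + 2) / 2) := by
      calc ∑ p ∈ D, |g p| ≤ ∑ p ∈ D, G p := Finset.sum_le_sum (fun p _ => abs_g_le p)
        _ ≤ 8 * ((Fintype.card Fq : ℝ)⁻¹) ^ ((n + 2) / 2) := by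
            apply tail_G
            intro p hp
            exact (Finset.mem_filter.mp hp).2
    have hc1D : ∑ p ∈ D, |c1 p|
        ≤ ((n : ℝ) + 1) * ((n : ℝ) + 1) * ((Fintype.card Fq : ℝ) ^ n)⁻¹ := by
      set D2 := D.filter (fun p => Nc a n p ≠ 0) with hD2
      have step : ∑ p ∈ D, |c1 p| = ∑ p ∈ D2, |c1 p| := by
        rw [hD2, ← Finset.sum_filter_add_sum_filter_not D (fun p => Nc a n p ≠ 0)]
        have : ∑ p ∈ D.filter (fun p => ¬ Nc a n p ≠ 0), |c1 p| = 0 := by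
          apply Finset.sum_eq_zero
          intro p hp
          have h0 : Nc a n p = 0 := by
            have := (Finset.mem_filter.mp hp).2
            tauto
          show |(fun p : Pair Fq => xone p.1 * xone p.2 * (Nc a n p : ℝ) /
            (Fintype.card Fq : ℝ) ^ n) p| = 0
          simp only []
          rw [h0]
          simp
        rw [this, add_zero]
      rw [step]
      have hbd : ∀ p ∈ D2, |c1 p|
          ≤ ((Fintype.card Fq : ℝ) ^ dT p.1)⁻¹ * ((Fintype.card Fq : ℝ) ^ dT p.2)⁻¹ *
            ((Fintype.card Fq : ℝ) ^ n)⁻¹ := by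
        intro p hp
        have hD' := Finset.mem_filter.mp hp
        have hdeg : n < dT p.1 + dT p.2 := (Finset.mem_filter.mp hD'.1).2
        exact abs_c1_le a ha hn hdeg
      refine le_trans (Finset.sum_le_sum hbd) ?_
      have : ∑ p ∈ D2, ((Fintype.card Fq : ℝ) ^ dT p.1)⁻¹ * ((Fintype.card Fq : ℝ) ^ dT p.2)⁻¹ *
            ((Fintype.card Fq : ℝ) ^ n)⁻¹
          = (∑ p ∈ D2, ((Fintype.card Fq : ℝ) ^ dT p.1)⁻¹ * ((Fintype.card Fq : ℝ) ^ dT p.2)⁻¹) *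
            ((Fintype.card Fq : ℝ) ^ n)⁻¹ := by
        rw [Finset.sum_mul]
      rw [this]
      have hA := bound_A_pairs D2 n (fun p hp => by
        have h0 : Nc a n p ≠ 0 := (Finset.mem_filter.mp hp).2
        exact Nc_deg_le a hn h0)
      apply mul_le_mul_of_nonneg_right hA (by positivity)
    exact add_le_add hc1D hgD
  linarith

end WithA2

end PhiCorrAux
namespace PhiCorrAux

variable {Fq : Type*} [Field Fq] [Fintype Fq]

lemma tprod_lit_eq :
    (∏' P : {P : Polynomial Fq // P.Monic ∧ Irreducible P},
        (1 - 2 / (Fintype.card Fq : ℝ) ^ (2 * P.1.natDegree)))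
      = ∑' p : Pair Fq, g p :=
  HasProd.tprod_eq hasProd_F

end PhiCorrAux

open PhiCorrAux in
theorem phi_correlation_monic' (Fq : Type*) [Field Fq] [Fintype Fq]
    (a : Fq) (ha : a ≠ 0) (B : ℝ) (hB0 : 0 < B) (hB1 : B < 1) :
    (fun n : ℕ =>
        (∑ᶠ f ∈ {f : Polynomial Fq | f.Monic ∧ f.natDegree = n},
            PhiR f * PhiR (f + Polynomial.C a) /
              ((Fintype.card Fq : ℝ) ^ f.natDegree *
                (Fintype.card Fq : ℝ) ^ (f + Polynomial.C a).natDegree)) /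
          (Fintype.card Fq : ℝ) ^ n -
        ∏' P : {P : Polynomial Fq // P.Monic ∧ Irreducible P},
          (1 - 2 / (Fintype.card Fq : ℝ) ^ (2 * P.1.natDegree)))
      =O[atTop] (fun n : ℕ => (n : ℝ) ^ (-B)) := by
  classical
  set r : ℝ := (Real.sqrt 2)⁻¹ with hrdef
  have hs2 : Real.sqrt 2 ^ 2 = 2 := Real.sq_sqrt (by norm_num)
  have hs2pos : 0 < Real.sqrt 2 := Real.sqrt_pos.mpr (by norm_num)
  have hr0 : 0 ≤ r := le_of_lt (inv_pos.mpr hs2pos)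
  have hr1 : r < 1 := by
    rw [hrdef, inv_lt_one_iff₀]
    right
    nlinarith [hs2pos]
  have hrsq : r ^ 2 = 2⁻¹ := by
    rw [hrdef, inv_pow, hs2]
  have hhalf_le_r : (2:ℝ)⁻¹ ≤ r := by
    rw [hrdef]
    have hs2le : Real.sqrt 2 ≤ 2 := by nlinarith [hs2pos]
    rw [inv_le_inv₀ (by norm_num) hs2pos] at *
    · exact hs2le
  have hqinv_le : ((Fintype.card Fq : ℝ))⁻¹ ≤ 2⁻¹ := by
    rw [inv_le_inv₀ (qR_pos (Fq := Fq)) (by norm_num)]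
    exact qR_two_le
  have hqinv0 : (0:ℝ) ≤ ((Fintype.card Fq : ℝ))⁻¹ := le_of_lt (inv_pos.mpr (qR_pos (Fq := Fq)))
  -- the comparison function and its limit
  have hT : Filter.Tendsto
      (fun n : ℕ => (n:ℝ) * ((((n:ℝ)+1)*((n:ℝ)+1) + 16) * r ^ n)) atTop (nhds 0) := by
    have t3 := tendsto_pow_const_mul_const_pow_of_lt_one 3 hr0 hr1
    have t2 := (tendsto_pow_const_mul_const_pow_of_lt_one 2 hr0 hr1).const_mul (2:ℝ)
    have t1 := (tendsto_pow_const_mul_const_pow_of_lt_one 1 hr0 hr1).const_mul (17:ℝ)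
    have := (t3.add t2).add t1
    simp only [mul_zero, add_zero] at this
    refine this.congr (fun n => ?_)
    push_cast
    ring
  have hev : ∀ᶠ n : ℕ in atTop,
      (n:ℝ) * ((((n:ℝ)+1)*((n:ℝ)+1) + 16) * r ^ n) < 1 := by
    have := hT.eventually (eventually_lt_nhds (by norm_num : (0:ℝ) < 1))
    exact this
  rw [Asymptotics.isBigO_iff]
  refine ⟨1, ?_⟩
  filter_upwards [Filter.eventually_ge_atTop 1, hev] with n hn1 hlt
  rw [tprod_lit_eq]
  have hmb := main_bound a ha hn1
  have hnpos : (0:ℝ) < (n:ℝ) := by exact_mod_cast hn1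
  have hn1R : (1:ℝ) ≤ (n:ℝ) := by exact_mod_cast hn1
  -- bound the two error terms by powers of r
  have part1 : ((Fintype.card Fq : ℝ) ^ n)⁻¹ ≤ r ^ n := by
    rw [← inv_pow]
    refine le_trans (pow_le_pow_left₀ hqinv0 hqinv_le n) ?_
    exact pow_le_pow_left₀ (by norm_num) hhalf_le_r n
  have part2 : ((Fintype.card Fq : ℝ)⁻¹) ^ ((n + 2) / 2) ≤ r ^ n := by
    refine le_trans (pow_le_pow_left₀ hqinv0 hqinv_le _) ?_
    have h2h : (2⁻¹ : ℝ) ^ ((n + 2) / 2) = r ^ (2 * ((n + 2) / 2)) := by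
      rw [pow_mul, hrsq]
    rw [h2h]
    apply pow_le_pow_of_le_one hr0 (le_of_lt hr1)
    omega
  have hE : ((n:ℝ)+1)*((n:ℝ)+1) * ((Fintype.card Fq : ℝ) ^ n)⁻¹
      + 16 * ((Fintype.card Fq : ℝ)⁻¹) ^ ((n + 2) / 2)
      ≤ (((n:ℝ)+1)*((n:ℝ)+1) + 16) * r ^ n := by
    have b1 : ((n:ℝ)+1)*((n:ℝ)+1) * ((Fintype.card Fq : ℝ) ^ n)⁻¹
        ≤ ((n:ℝ)+1)*((n:ℝ)+1) * r ^ n :=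
      mul_le_mul_of_nonneg_left part1 (by positivity)
    have b2 : 16 * ((Fintype.card Fq : ℝ)⁻¹) ^ ((n + 2) / 2) ≤ 16 * r ^ n :=
      mul_le_mul_of_nonneg_left part2 (by norm_num)
    calc _ ≤ ((n:ℝ)+1)*((n:ℝ)+1) * r ^ n + 16 * r ^ n := add_le_add b1 b2
      _ = (((n:ℝ)+1)*((n:ℝ)+1) + 16) * r ^ n := by ring
  have hEfin : (((n:ℝ)+1)*((n:ℝ)+1) + 16) * r ^ n ≤ (n:ℝ)⁻¹ := by
    have h1 : (((n:ℝ)+1)*((n:ℝ)+1) + 16) * r ^ n * (n:ℝ) < 1 := by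
      calc (((n:ℝ)+1)*((n:ℝ)+1) + 16) * r ^ n * (n:ℝ)
          = (n:ℝ) * ((((n:ℝ)+1)*((n:ℝ)+1) + 16) * r ^ n) := by ring
        _ < 1 := hlt
    have h2 : (0:ℝ) ≤ (((n:ℝ)+1)*((n:ℝ)+1) + 16) * r ^ n := by positivity
    rw [← one_div, le_div_iff₀ hnpos]
    linarith
  have hrpow : (n:ℝ)⁻¹ ≤ (n:ℝ) ^ (-B) := by
    rw [Real.rpow_neg (le_of_lt hnpos)]
    have hle : (n:ℝ) ^ B ≤ (n:ℝ) := by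
      have := Real.rpow_le_rpow_of_exponent_le hn1R (le_of_lt hB1)
      rwa [Real.rpow_one] at this
    exact inv_anti₀ (Real.rpow_pos_of_pos hnpos B) hle
  rw [Real.norm_eq_abs, Real.norm_eq_abs, one_mul]
  have hlast : |(n:ℝ) ^ (-B)| = (n:ℝ) ^ (-B) :=
    abs_of_nonneg (Real.rpow_nonneg (le_of_lt hnpos) _)
  rw [hlast]
  calc |_| ≤ _ := hmb
    _ ≤ (((n:ℝ)+1)*((n:ℝ)+1) + 16) * r ^ n := hE
    _ ≤ (n:ℝ)⁻¹ := hEfin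
    _ ≤ (n:ℝ) ^ (-B) := hrpow

end

/-- For fixed `a ∈ 𝔽_q^*` and any `0 < B < 1`,
`q^{-n} ∑_{f ∈ M_{n,q}} Φ(f)Φ(f+a)/(|f||f+a|) = ∏_P (1 - 2 q^{-2 deg P}) + O(n^{-B})`. -/
theorem phi_correlation_monic (Fq : Type*) [Field Fq] [Fintype Fq]
    (a : Fq) (ha : a ≠ 0) (B : ℝ) (hB0 : 0 < B) (hB1 : B < 1) :
    (fun n : ℕ =>
        (∑ᶠ f ∈ {f : Polynomial Fq | f.Monic ∧ f.natDegree = n},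
            PhiR f * PhiR (f + Polynomial.C a) /
              ((Fintype.card Fq : ℝ) ^ f.natDegree *
                (Fintype.card Fq : ℝ) ^ (f + Polynomial.C a).natDegree)) /
          (Fintype.card Fq : ℝ) ^ n -
        ∏' P : {P : Polynomial Fq // P.Monic ∧ Irreducible P},
          (1 - 2 / (Fintype.card Fq : ℝ) ^ (2 * P.1.natDegree)))
      =O[atTop] (fun n : ℕ => (n : ℝ) ^ (-B)) := by
  exact phi_correlation_monic' Fq a ha B hB0 hB1
end
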